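/- arXiv:2602.21159 — 9 statements merged into one kernel-verified Lean document; each statement's English description precedes it below -/
import Mathlib

section
/- Let α ∈ ℝ be irrational. Then the set 𝓝₁(α) = {λ ∈ ℝ : D(α,λ) fails} is a dense G_δ subset of ℝ (in particular it is comeager in ℝ). -/
/-- The Diophantine condition `D(α, λ)` for a single coefficient (`N = 1`). -/
def dioph1 (α lam : ℂ) : Prop :=
  ∃ C > (0 : ℝ), ∃ M > (0 : ℝ), ∃ R > (0 : ℝ),
    ∀ τ ξ : ℤ, R ≤ (|τ| : ℝ) + (|ξ| : ℝ) →
      C * (((|τ| : ℝ) + (|ξ| : ℝ)) ^ (-M)) ≤ ‖(τ : ℂ) + α * (ξ : ℂ) - lam‖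

/-- The closed set of `λ` satisfying the estimate with constants `1/(n+1)`, `m+1`, `k+1`. -/
def Fset (α : ℝ) (n m k : ℕ) : Set ℝ :=
  {x | ∀ τ ξ : ℤ, ((k : ℝ) + 1) ≤ (|τ| : ℝ) + (|ξ| : ℝ) →
    (1 / ((n : ℝ) + 1)) * (((|τ| : ℝ) + (|ξ| : ℝ)) ^ (-((m : ℝ) + 1))) ≤
      ‖(τ : ℂ) + α * (ξ : ℂ) - (x : ℂ)‖}

lemma isClosed_Fset (α : ℝ) (n m k : ℕ) : IsClosed (Fset α n m k) := by
  have : Fset α n m k = ⋂ (τ : ℤ) (ξ : ℤ) (_ : ((k : ℝ) + 1) ≤ (|τ| : ℝ) + (|ξ| : ℝ)),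
      {x : ℝ | (1 / ((n : ℝ) + 1)) * (((|τ| : ℝ) + (|ξ| : ℝ)) ^ (-((m : ℝ) + 1))) ≤
        ‖(τ : ℂ) + α * (ξ : ℂ) - (x : ℂ)‖} := by
    ext x
    simp [Fset, Set.mem_iInter]
  rw [this]
  refine isClosed_iInter fun τ => isClosed_iInter fun ξ => isClosed_iInter fun _ => ?_
  exact isClosed_le continuous_const
    ((continuous_norm).comp <| by continuity)

lemma Fset_subset_dioph (α : ℝ) (n m k : ℕ) {x : ℝ} (hx : x ∈ Fset α n m k) :
    dioph1 (α : ℂ) (x : ℂ) := by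
  refine ⟨1 / ((n : ℝ) + 1), by positivity, (m : ℝ) + 1, by positivity,
    (k : ℝ) + 1, by positivity, fun τ ξ h => hx τ ξ h⟩

lemma dioph_subset_Fset (α : ℝ) {x : ℝ} (hx : dioph1 (α : ℂ) (x : ℂ)) :
    ∃ n m k : ℕ, x ∈ Fset α n m k := by
  obtain ⟨C, hC, M, hM, R, hR, h⟩ := hx
  obtain ⟨n, hn⟩ := exists_nat_ge (1 / C)
  obtain ⟨m, hm⟩ := exists_nat_ge M
  obtain ⟨k, hk⟩ := exists_nat_ge R
  refine ⟨n, m, k, fun τ ξ hb => ?_⟩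
  set b : ℝ := (|τ| : ℝ) + (|ξ| : ℝ) with hbdef
  have hb1 : (1 : ℝ) ≤ b := le_trans (by have : (0:ℝ) ≤ (k:ℝ) := Nat.cast_nonneg k; linarith) hb
  have hRb : R ≤ b := le_trans (hk.trans (by linarith)) hb
  have h1 : (1 / ((n : ℝ) + 1)) ≤ C := by
    rw [div_le_iff₀ (by positivity)]
    have : 1 / C ≤ (n : ℝ) + 1 := hn.trans (by linarith)
    rw [div_le_iff₀ hC] at this
    linarith [mul_comm C ((n : ℝ) + 1)]
  have h2 : b ^ (-((m : ℝ) + 1)) ≤ b ^ (-M) :=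
    Real.rpow_le_rpow_of_exponent_le hb1 (by linarith [hm])
  calc (1 / ((n : ℝ) + 1)) * b ^ (-((m : ℝ) + 1))
      ≤ C * b ^ (-M) := by
        apply mul_le_mul h1 h2 (by positivity) (le_of_lt hC)
    _ ≤ _ := h τ ξ hRb

lemma dense_compl_Fset (α : ℝ) (hα : Irrational α) (n m k : ℕ) :
    Dense (Fset α n m k)ᶜ := by
  set β : ℝ := ((k : ℝ) + 1) * α with hβdef
  have hβ : Irrational β := by
    have : Irrational (((k + 1 : ℕ) : ℝ) * α) := hα.natCast_mul (Nat.succ_ne_zero k)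
    simpa [hβdef] using this
  -- the subgroup ℤ + βℤ
  set S : AddSubgroup ℝ :=
    { carrier := {x | ∃ τ ξ : ℤ, x = (τ : ℝ) + β * (ξ : ℝ)}
      zero_mem' := ⟨0, 0, by simp⟩
      add_mem' := by
        rintro a b ⟨t1, x1, rfl⟩ ⟨t2, x2, rfl⟩
        exact ⟨t1 + t2, x1 + x2, by push_cast; ring⟩
      neg_mem' := by
        rintro a ⟨t, x, rfl⟩
        exact ⟨-t, -x, by push_cast; ring⟩ } with hSdef
  have hdense : Dense (S : Set ℝ) := by
    rcases S.dense_or_cyclic with h | ⟨a, ha⟩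
    · exact h
    · exfalso
      have h1 : (1 : ℝ) ∈ S := ⟨1, 0, by simp⟩
      have h2 : β ∈ S := ⟨0, 1, by simp⟩
      rw [ha, AddSubgroup.mem_closure_singleton] at h1 h2
      obtain ⟨p, hp⟩ := h1
      obtain ⟨q, hq⟩ := h2
      rw [zsmul_eq_mul] at hp hq
      have hp0 : (p : ℝ) ≠ 0 := by
        intro h0; rw [h0, zero_mul] at hp; exact one_ne_zero hp.symm
      have : β = ((q / p : ℚ) : ℝ) := by
        have ha' : a = 1 / (p : ℝ) := by field_simp at hp ⊢; linarith [mul_comm (p:ℝ) a]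
        rw [← hq, ha']
        push_cast
        field_simp
      exact hβ ⟨q / p, this.symm⟩
  rw [dense_iff_inter_open]
  rintro U hU ⟨u, hu⟩
  obtain ⟨ε, hε, hball⟩ := Metric.isOpen_iff.1 hU u hu
  have hVopen : IsOpen (Metric.ball u ε \ Set.range ((↑) : ℤ → ℝ)) :=
    (Metric.isOpen_ball).sdiff Int.isClosedEmbedding_coe_real.isClosed_range
  have hVne : (Metric.ball u ε \ Set.range ((↑) : ℤ → ℝ)).Nonempty := by
    obtain ⟨r, hr, hr1, hr2⟩ := exists_irrational_btwn (show u - ε < u + ε by linarith)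
    refine ⟨r, ?_, ?_⟩
    · rw [Real.ball_eq_Ioo]; exact ⟨hr1, hr2⟩
    · rintro ⟨z, rfl⟩; exact hr ⟨z, by push_cast; ring⟩
  obtain ⟨y, hyV, hyS⟩ := hdense.inter_open_nonempty _ hVopen hVne
  have hyS' : ∃ τ ξ : ℤ, y = (τ : ℝ) + β * (ξ : ℝ) := hyS
  obtain ⟨τ, ξ, hy⟩ := hyS'
  subst hy
  have hξ : ξ ≠ 0 := by
    rintro rfl
    exact hyV.2 ⟨τ, by simp⟩
  refine ⟨(τ : ℝ) + β * ξ, hball hyV.1, fun hF => ?_⟩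
  have habs : ‖(τ : ℂ) + (α : ℂ) * ((((k : ℤ) + 1) * ξ : ℤ) : ℂ)
      - (((τ : ℝ) + β * ξ : ℝ) : ℂ)‖ = 0 := by
    rw [norm_eq_zero]
    push_cast [hβdef]
    ring
  have hbig' : ((k : ℤ) + 1) ≤ |τ| + |((k : ℤ) + 1) * ξ| := by
    have h1 : (1 : ℤ) ≤ |ξ| := Int.one_le_abs hξ
    have h2 : ((k : ℤ) + 1) ≤ |((k : ℤ) + 1) * ξ| := by
      rw [abs_mul, abs_of_nonneg (by positivity : (0:ℤ) ≤ (k : ℤ) + 1)]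
      nlinarith
    have h3 : (0 : ℤ) ≤ |τ| := abs_nonneg τ
    linarith
  have := hF τ (((k : ℤ) + 1) * ξ) (by exact_mod_cast hbig')
  rw [habs] at this
  have hb0 : (0:ℝ) < |((τ : ℤ) : ℝ)| + |((((k : ℤ) + 1) * ξ : ℤ) : ℝ)| := by
    have h0 : (0:ℤ) < |τ| + |((k : ℤ) + 1) * ξ| := by
      have : (0:ℤ) ≤ (k : ℤ) := Int.natCast_nonneg k
      linarith
    exact_mod_cast h0
  have hpos : (0:ℝ) < (1 / ((n : ℝ) + 1)) *
      ((|((τ : ℤ) : ℝ)| + |((((k : ℤ) + 1) * ξ : ℤ) : ℝ)|) ^ (-((m : ℝ) + 1))) := by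
    positivity
  linarith

/-- For an irrational real `α`, the set `𝓝₁(α) = {λ ∈ ℝ : D(α, λ) fails}` is a dense
`G_δ` subset of `ℝ`. -/
theorem stmt2 (α : ℝ) (hα : Irrational α) :
    Dense {x : ℝ | ¬ dioph1 (α : ℂ) (x : ℂ)} ∧ IsGδ {x : ℝ | ¬ dioph1 (α : ℂ) (x : ℂ)} := by
  have hEq : {x : ℝ | ¬ dioph1 (α : ℂ) (x : ℂ)} =
      ⋂ p : ℕ × ℕ × ℕ, (Fset α p.1 p.2.1 p.2.2)ᶜ := by
    ext x
    simp only [Set.mem_setOf_eq, Set.mem_iInter, Set.mem_compl_iff, Prod.forall]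
    constructor
    · intro h n m k hx
      exact h (Fset_subset_dioph α n m k hx)
    · intro h hd
      obtain ⟨n, m, k, hx⟩ := dioph_subset_Fset α hd
      exact h n m k hx
  rw [hEq]
  constructor
  · exact dense_iInter_of_isOpen
      (fun p => (isClosed_Fset α p.1 p.2.1 p.2.2).isOpen_compl)
      (fun p => dense_compl_Fset α hα p.1 p.2.1 p.2.2)
  · exact IsGδ.iInter_of_isOpen
      (fun p => (isClosed_Fset α p.1 p.2.1 p.2.2).isOpen_compl)
end

section
/- Let α = p/q be rational, where p ∈ ℤ, q ∈ ℕ with q ≥ 1 and gcd(p,q) = 1 (with the convention p = 0, q = 1 when α = 0). Then 𝓜₁(α) = q⁻¹ℤ = {m/q : m ∈ ℤ}, viewed as a subset of ℂ; that is, for λ ∈ ℂ the condition D(p/q, λ) fails if and only if qλ ∈ ℤ. -/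
lemma int_dist_pos (z : ℂ) (hz : ∀ m : ℤ, z ≠ (m : ℂ)) :
    ∃ c > (0:ℝ), ∀ n : ℤ, c ≤ ‖(n : ℂ) - z‖ := by
  have hre : ∀ n : ℤ, |(n : ℝ) - z.re| ≤ ‖(n : ℂ) - z‖ := by
    intro n
    have := Complex.abs_re_le_norm ((n : ℂ) - z)
    simpa using this
  by_cases him : z.im = 0
  · -- z is real, and z.re is not an integer
    set x := z.re with hx
    have hxi : ∀ m : ℤ, x ≠ (m : ℝ) := by
      intro m hm
      exact hz m (Complex.ext hm (by simpa using him))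
    set f := Int.fract x with hf
    have hf0 : 0 < f := by
      rcases lt_or_eq_of_le (Int.fract_nonneg x) with h | h
      · exact h
      · exact absurd (by linarith [Int.fract_add_floor x] : x = (⌊x⌋ : ℝ)) (hxi ⌊x⌋)
    have hf1 : f < 1 := Int.fract_lt_one x
    refine ⟨min f (1 - f), lt_min hf0 (by linarith), ?_⟩
    intro n
    refine le_trans ?_ (hre n)
    have hfl : x = (⌊x⌋ : ℝ) + f := by
      have := Int.fract_add_floor x
      linarith
    rcases le_or_gt n ⌊x⌋ with h | h
    · have : (n : ℝ) ≤ (⌊x⌋ : ℝ) := by exact_mod_cast h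
      have h2 : (n : ℝ) - x ≤ -f := by linarith
      calc min f (1 - f) ≤ f := min_le_left _ _
        _ ≤ |(n : ℝ) - x| := by rw [abs_sub_comm]; exact le_trans (by linarith) (le_abs_self _)
    · have : (⌊x⌋ : ℝ) + 1 ≤ (n : ℝ) := by exact_mod_cast h
      have h2 : 1 - f ≤ (n : ℝ) - x := by linarith
      calc min f (1 - f) ≤ 1 - f := min_le_right _ _
        _ ≤ |(n : ℝ) - x| := le_trans h2 (le_abs_self _)
  · refine ⟨|z.im|, abs_pos.mpr him, ?_⟩
    intro n
    have := Complex.abs_im_le_norm ((n : ℂ) - z)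
    simpa using this

/-- For a rational coefficient `α = p/q` in lowest terms, `𝓜₁(α) = q⁻¹ℤ`:
`D(p/q, λ)` fails if and only if `λ = m/q` for some integer `m`. -/
theorem stmt3 (p : ℤ) (q : ℕ) (hq : 1 ≤ q) (hpq : Int.gcd p (q : ℤ) = 1) :
    {lam : ℂ | ¬ dioph1 ((p : ℂ) / (q : ℂ)) lam} =
      {lam : ℂ | ∃ m : ℤ, lam = (m : ℂ) / (q : ℂ)} := by
  have hq0 : (q : ℂ) ≠ 0 := Nat.cast_ne_zero.mpr (by omega)
  have hqR : (0:ℝ) < (q : ℝ) := by exact_mod_cast hq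
  ext lam
  simp only [Set.mem_setOf_eq]
  constructor
  · -- ¬dioph1 → ∃ m
    intro hnd
    by_contra hm
    push_neg at hm
    apply hnd
    -- q * lam is not an integer
    have hz : ∀ m : ℤ, (q : ℂ) * lam ≠ (m : ℂ) := by
      intro m hqm
      exact hm m (by rw [eq_div_iff hq0, mul_comm]; exact hqm)
    obtain ⟨c, hc, hcle⟩ := int_dist_pos ((q : ℂ) * lam) hz
    refine ⟨c / q, by positivity, 1, one_pos, 1, one_pos, ?_⟩
    intro τ ξ hs
    have hkey : c / q ≤ ‖(τ : ℂ) + (p : ℂ) / (q : ℂ) * (ξ : ℂ) - lam‖ := by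
      have heq : (τ : ℂ) + (p : ℂ) / (q : ℂ) * (ξ : ℂ) - lam
          = (((q * τ + p * ξ : ℤ) : ℂ) - (q : ℂ) * lam) / (q : ℂ) := by
        field_simp
        push_cast
        ring
      rw [heq, norm_div]
      have : ‖(q : ℂ)‖ = (q : ℝ) := by
        simpa using Complex.norm_natCast q
      rw [this]
      gcongr
      exact hcle _
    refine le_trans ?_ hkey
    have hs1 : (1:ℝ) ≤ (|τ| : ℝ) + (|ξ| : ℝ) := hs
    have hpow : ((|τ| : ℝ) + (|ξ| : ℝ)) ^ (-(1:ℝ)) ≤ 1 :=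
      Real.rpow_le_one_of_one_le_of_nonpos hs1 (by norm_num)
    calc c / q * (((|τ| : ℝ) + (|ξ| : ℝ)) ^ (-(1:ℝ)))
        ≤ c / q * 1 := by
          apply mul_le_mul_of_nonneg_left hpow (by positivity)
      _ = c / q := mul_one _
  · -- λ = m/q → ¬dioph1
    rintro ⟨m, rfl⟩ ⟨C, hC, M, hM, R, hR, h⟩
    set a := Int.gcdA p q with ha
    set b := Int.gcdB p q with hb
    have hab : (1:ℤ) = p * a + (q : ℤ) * b := by
      have := Int.gcd_eq_gcd_ab p (q : ℤ)
      rw [hpq] at this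
      exact_mod_cast this
    set k : ℤ := (⌈R⌉₊ : ℤ) + |m * a| with hk
    have hk0 : 0 ≤ k := by positivity
    set τ : ℤ := m * b + p * k with hτ
    set ξ : ℤ := m * a - (q : ℤ) * k with hξ
    have hsum : (q : ℤ) * τ + p * ξ = m := by
      rw [hτ, hξ]; linear_combination m * hab.symm
    -- the point is exactly lam, so abs = 0
    have hzero : (τ : ℂ) + (p : ℂ) / (q : ℂ) * (ξ : ℂ) - (m : ℂ) / (q : ℂ) = 0 := by
      have hce : (((q : ℤ) * τ + p * ξ : ℤ) : ℂ) = ((m : ℤ) : ℂ) := by exact_mod_cast congrArg (Int.cast : ℤ → ℂ) hsum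
      push_cast at hce
      field_simp
      linear_combination hce
    have hξlarge : R ≤ (|ξ| : ℝ) := by
      have h1 : (⌈R⌉₊ : ℤ) ≤ |ξ| := by
        have : (q : ℤ) * k ≥ k := le_mul_of_one_le_left hk0 (by exact_mod_cast hq)
        have h2 : |ξ| ≥ (q:ℤ) * k - |m * a| := by
          rw [hξ]
          have := abs_sub_abs_le_abs_sub ((q:ℤ) * k) (m * a)
          rw [abs_sub_comm] at this
          have hqk : |(q:ℤ) * k| = (q:ℤ) * k := abs_of_nonneg (by positivity)
          linarith
        have hkk : k = (⌈R⌉₊ : ℤ) + |m * a| := hk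
        linarith
      calc R ≤ (⌈R⌉₊ : ℝ) := Nat.le_ceil R
        _ ≤ (|ξ| : ℝ) := by exact_mod_cast h1
    have hs : R ≤ (|τ| : ℝ) + (|ξ| : ℝ) := by
      have : (0:ℝ) ≤ (|τ| : ℝ) := by positivity
      linarith
    have := h τ ξ hs
    rw [hzero, norm_zero] at this
    have hpos : 0 < C * (((|τ| : ℝ) + (|ξ| : ℝ)) ^ (-M)) := by
      apply mul_pos hC
      apply Real.rpow_pos_of_pos
      linarith
    linarith
end

section
/- Let N ≥ 1 and α = (α₁,…,α_N) ∈ ℂ^N, and suppose the Diophantine condition D(α,0) holds. Then 𝓜_N(α) = 𝓜_{N,∞}(α) ∩ (ℤ + α₁ℤ + ⋯ + α_Nℤ)^c, i.e. λ ∈ ℂ satisfies D(α,λ) fails if and only if λ ∈ 𝓜_{N,∞}(α) and λ ∉ ℤ + α₁ℤ + ⋯ + α_Nℤ. -/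
open Finset

/-- The Diophantine condition `D(α, λ)` for `N` coefficients `α = (α₁, …, α_N)`. -/
def dioph {N : ℕ} (α : Fin N → ℂ) (lam : ℂ) : Prop :=
  ∃ C > (0 : ℝ), ∃ M > (0 : ℝ), ∃ R > (0 : ℝ),
    ∀ (τ : ℤ) (ξ : Fin N → ℤ), R ≤ (|τ| : ℝ) + ∑ j, (|ξ j| : ℝ) →
      C * (((|τ| : ℝ) + ∑ j, (|ξ j| : ℝ)) ^ (-M)) ≤
        ‖(τ : ℂ) + (∑ j, α j * (ξ j : ℂ)) - lam‖

/-- The `G_δ` set `𝓜_{N,∞}(α) = ⋂_j ⋃_{|(τ,ξ)| > 1} M(j, τ, ξ)`. -/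
def Minf {N : ℕ} (α : Fin N → ℂ) : Set ℂ :=
  ⋂ j : ℕ, ⋃ τ : ℤ, ⋃ ξ : Fin N → ℤ, ⋃ _ : 1 < (|τ| : ℝ) + ∑ i, (|ξ i| : ℝ),
    {lam : ℂ | ‖(τ : ℂ) + (∑ i, α i * (ξ i : ℂ)) - lam‖ <
      ((|τ| : ℝ) + ∑ i, (|ξ i| : ℝ)) ^ (-(j : ℝ))}

/-- The lattice `ℤ + α₁ℤ + ⋯ + α_Nℤ ⊂ ℂ`. -/
def latt {N : ℕ} (α : Fin N → ℂ) : Set ℂ :=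
  {z : ℂ | ∃ (n₀ : ℤ) (n : Fin N → ℤ), z = (n₀ : ℂ) + ∑ j, α j * (n j : ℂ)}

lemma two_le_size {N : ℕ} {τ : ℤ} {ξ : Fin N → ℤ}
    (h : 1 < (|τ| : ℝ) + ∑ j, (|ξ j| : ℝ)) : (2 : ℝ) ≤ (|τ| : ℝ) + ∑ j, (|ξ j| : ℝ) := by
  have hcast : (|τ| : ℝ) + ∑ j, (|ξ j| : ℝ) = ((|τ| + ∑ j, |ξ j| : ℤ) : ℝ) := by push_cast; ring
  rw [hcast] at h ⊢
  have h1 : (1 : ℤ) < |τ| + ∑ j, |ξ j| := by exact_mod_cast h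
  exact_mod_cast h1

/-- If `D(α,0)` holds then `D(α,λ)` holds for every lattice point `λ`. -/
lemma dioph_of_latt {N : ℕ} (α : Fin N → ℂ) (h0 : dioph α 0) {lam : ℂ}
    (hl : lam ∈ latt α) : dioph α lam := by
  obtain ⟨n₀, n, rfl⟩ := hl
  obtain ⟨C, hC, M, hM, R, hR, h⟩ := h0
  set K : ℝ := (|n₀| : ℝ) + ∑ j, (|n j| : ℝ) with hKdef
  have hK0 : 0 ≤ K := by positivity
  refine ⟨C * (2 : ℝ) ^ (-M), by positivity, M, hM, 2 * max R 1 + 2 * K, by positivity, ?_⟩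
  intro τ ξ hs
  set s : ℝ := (|τ| : ℝ) + ∑ j, (|ξ j| : ℝ) with hsdef
  have hmax1 : (1 : ℝ) ≤ max R 1 := le_max_right _ _
  have hmaxR : R ≤ max R 1 := le_max_left _ _
  have hspos : (0 : ℝ) < s := by linarith
  set τ' : ℤ := τ - n₀ with hτ'
  set ξ' : Fin N → ℤ := fun j => ξ j - n j with hξ'
  set s' : ℝ := (|τ'| : ℝ) + ∑ j, (|ξ' j| : ℝ) with hs'def
  have hlow : s - K ≤ s' := by
    have h1 : (|τ| : ℝ) - (|n₀| : ℝ) ≤ (|τ'| : ℝ) := by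
      exact_mod_cast abs_sub_abs_le_abs_sub τ n₀
    have h2 : ∑ j, ((|ξ j| : ℝ) - (|n j| : ℝ)) ≤ ∑ j, (|ξ' j| : ℝ) :=
      Finset.sum_le_sum fun j _ => by exact_mod_cast abs_sub_abs_le_abs_sub (ξ j) (n j)
    rw [Finset.sum_sub_distrib] at h2
    simp only [hsdef, hKdef, hs'def]
    linarith
  have hupp : s' ≤ s + K := by
    have h1 : (|τ'| : ℝ) ≤ (|τ| : ℝ) + (|n₀| : ℝ) := by exact_mod_cast abs_sub τ n₀
    have h2 : ∑ j, (|ξ' j| : ℝ) ≤ ∑ j, ((|ξ j| : ℝ) + (|n j| : ℝ)) :=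
      Finset.sum_le_sum fun j _ => by exact_mod_cast abs_sub (ξ j) (n j)
    rw [Finset.sum_add_distrib] at h2
    simp only [hsdef, hKdef, hs'def]
    linarith
  have hs'R : R ≤ s' := by linarith
  have hs'pos : 0 < s' := lt_of_lt_of_le hR hs'R
  have hKs : K ≤ s := by linarith
  have hs'2s : s' ≤ 2 * s := by linarith
  have hbound := h τ' ξ' hs'R
  have hval : ((τ' : ℂ) + (∑ j, α j * ((ξ' j : ℤ) : ℂ)) - 0)
      = (τ : ℂ) + (∑ j, α j * ((ξ j : ℤ) : ℂ)) - ((n₀ : ℂ) + ∑ j, α j * ((n j : ℤ) : ℂ)) := by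
    simp only [hτ', hξ', sub_zero]
    push_cast
    rw [show (∑ j, α j * ((ξ j : ℂ) - (n j : ℂ)))
        = ∑ j, (α j * (ξ j : ℂ) - α j * (n j : ℂ)) from Finset.sum_congr rfl fun j _ => by ring,
      Finset.sum_sub_distrib]
    ring
  rw [hval] at hbound
  refine le_trans ?_ hbound
  have hmul : C * (2 : ℝ) ^ (-M) * s ^ (-M) = C * ((2 * s) ^ (-M)) := by
    rw [Real.mul_rpow (by norm_num) hspos.le]; ring
  rw [hmul]
  have hmono : (2 * s) ^ (-M) ≤ s' ^ (-M) :=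
    Real.rpow_le_rpow_of_nonpos hs'pos hs'2s (by linarith)
  exact mul_le_mul_of_nonneg_left hmono hC.le

/-- Any `λ` for which `D(α,λ)` fails belongs to `𝓜_{N,∞}(α)`. -/
lemma mem_Minf_of_not_dioph {N : ℕ} (α : Fin N → ℂ) {lam : ℂ}
    (h : ¬ dioph α lam) : lam ∈ Minf α := by
  simp only [Minf, Set.mem_iInter, Set.mem_iUnion, Set.mem_setOf_eq]
  intro j
  rw [dioph] at h
  push_neg at h
  obtain ⟨τ, ξ, hs, hlt⟩ := h 1 one_pos ((j : ℝ) + 1) (by positivity) 2 two_pos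
  refine ⟨τ, ξ, by linarith, ?_⟩
  rw [one_mul] at hlt
  refine lt_of_lt_of_le hlt ?_
  exact Real.rpow_le_rpow_of_exponent_le (by linarith) (by linarith)

/-- The set of lattice points of bounded size is finite. -/
lemma finite_latt_pts {N : ℕ} (α : Fin N → ℂ) (B : ℝ) :
    Set.Finite {z : ℂ | ∃ (τ : ℤ) (ξ : Fin N → ℤ),
      ((|τ| : ℝ) + ∑ j, (|ξ j| : ℝ) ≤ B) ∧ z = (τ : ℂ) + ∑ j, α j * ((ξ j : ℤ) : ℂ)} := by
  have hsub : {z : ℂ | ∃ (τ : ℤ) (ξ : Fin N → ℤ),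
      ((|τ| : ℝ) + ∑ j, (|ξ j| : ℝ) ≤ B) ∧ z = (τ : ℂ) + ∑ j, α j * ((ξ j : ℤ) : ℂ)} ⊆
      (fun p : ℤ × (Fin N → ℤ) => ((p.1 : ℂ) + ∑ j, α j * ((p.2 j : ℤ) : ℂ))) ''
        {p : ℤ × (Fin N → ℤ) | (|p.1| : ℝ) + ∑ j, (|p.2 j| : ℝ) ≤ B} := by
    rintro z ⟨τ, ξ, hb, rfl⟩
    exact ⟨(τ, ξ), hb, rfl⟩
  refine Set.Finite.subset (Set.Finite.image _ ?_) hsub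
  refine Set.Finite.subset ((Set.finite_Icc (-⌈B⌉) ⌈B⌉).prod
    (Set.finite_Icc (fun _ => -⌈B⌉ : Fin N → ℤ) (fun _ => ⌈B⌉))) ?_
  rintro ⟨τ, ξ⟩ hp
  simp only [Set.mem_setOf_eq] at hp
  have habs : ∀ m : ℤ, |(m : ℝ)| = ((|m| : ℤ) : ℝ) := fun m => by push_cast; ring
  have hsumnn : (0 : ℝ) ≤ ∑ j, |((ξ j : ℤ) : ℝ)| := Finset.sum_nonneg fun j _ => abs_nonneg _
  have hτ : |((τ : ℤ) : ℝ)| ≤ B := by linarith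
  have hτ' : |τ| ≤ ⌈B⌉ := by
    rw [habs] at hτ; exact_mod_cast hτ.trans (Int.le_ceil B)
  have hξ : ∀ i, |ξ i| ≤ ⌈B⌉ := by
    intro i
    have h1 : |((ξ i : ℤ) : ℝ)| ≤ ∑ j, |((ξ j : ℤ) : ℝ)| :=
      Finset.single_le_sum (f := fun j => |((ξ j : ℤ) : ℝ)|) (fun j _ => abs_nonneg _)
        (Finset.mem_univ i)
    have h2 : (0 : ℝ) ≤ |((τ : ℤ) : ℝ)| := abs_nonneg _
    have h3 : |((ξ i : ℤ) : ℝ)| ≤ B := by linarith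
    rw [habs] at h3
    exact_mod_cast h3.trans (Int.le_ceil B)
  refine ⟨Set.mem_Icc.mpr ⟨(abs_le.mp hτ').1, (abs_le.mp hτ').2⟩, Set.mem_Icc.mpr ⟨?_, ?_⟩⟩
  · exact fun i => (abs_le.mp (hξ i)).1
  · exact fun i => (abs_le.mp (hξ i)).2

/-- If `λ ∈ 𝓜_{N,∞}(α)` and `λ` is not a lattice point, then `D(α,λ)` fails. -/
lemma not_dioph_of_mem {N : ℕ} (α : Fin N → ℂ) {lam : ℂ}
    (hMem : lam ∈ Minf α) (hl : lam ∉ latt α) : ¬ dioph α lam := by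
  intro hd
  obtain ⟨C, hC, M, hMpos, R, hR, hdio⟩ := hd
  simp only [Minf, Set.mem_iInter, Set.mem_iUnion, Set.mem_setOf_eq] at hMem
  choose τf ξf h1 h2 using hMem
  set s : ℕ → ℝ := fun j => (|τf j| : ℝ) + ∑ i, (|ξf j i| : ℝ) with hsdef
  set j₀ : ℕ := ⌈M⌉₊ + 1 with hj₀
  have hMj₀ : M + 1 ≤ (j₀ : ℝ) := by
    have := Nat.le_ceil M
    push_cast [hj₀]
    linarith
  by_cases hb : ∃ j, j₀ ≤ j ∧ max R (1 / C) < s j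
  · obtain ⟨j, hj, hsj⟩ := hb
    have hs2 : (2 : ℝ) ≤ s j := two_le_size (h1 j)
    have hspos : (0 : ℝ) < s j := by linarith
    have hsR : R ≤ s j := ((le_max_left R (1 / C)).trans_lt hsj).le
    have hsC : 1 / C < s j := (le_max_right R (1 / C)).trans_lt hsj
    have hdb := hdio (τf j) (ξf j) hsR
    have hch : C * (s j) ^ (-M) < (s j) ^ (-(j : ℝ)) := lt_of_le_of_lt hdb (h2 j)
    have hjj : (j₀ : ℝ) ≤ (j : ℝ) := by exact_mod_cast hj
    have hstep : (s j) ^ (-(j : ℝ)) ≤ (s j) ^ (-(j₀ : ℝ)) :=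
      Real.rpow_le_rpow_of_exponent_le (by linarith) (by linarith)
    have hstep2 : (s j) ^ (-(j₀ : ℝ)) ≤ (s j) ^ (-M) * (s j) ^ (-1 : ℝ) := by
      rw [← Real.rpow_add hspos]
      exact Real.rpow_le_rpow_of_exponent_le (by linarith) (by linarith)
    have hcancel : C < (s j) ^ (-1 : ℝ) := by
      have hpow : (0 : ℝ) < (s j) ^ (-M) := Real.rpow_pos_of_pos hspos _
      have : C * (s j) ^ (-M) < (s j) ^ (-M) * (s j) ^ (-1 : ℝ) := by linarith
      rw [mul_comm ((s j) ^ (-M))] at this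
      exact lt_of_mul_lt_mul_right this hpow.le
    rw [Real.rpow_neg_one] at hcancel
    have e1 : C * s j < 1 := by
      have h := mul_lt_mul_of_pos_right hcancel hspos
      rwa [inv_mul_cancel₀ hspos.ne'] at h
    have e2 : 1 < C * s j := by
      rw [div_lt_iff₀ hC] at hsC
      linarith [mul_comm C (s j)]
    linarith
  · push_neg at hb
    set B : ℝ := max R (1 / C) with hBdef
    have hFfin := finite_latt_pts α B
    set F : Set ℂ := {z : ℂ | ∃ (τ : ℤ) (ξ : Fin N → ℤ),
      ((|τ| : ℝ) + ∑ i, (|ξ i| : ℝ) ≤ B) ∧ z = (τ : ℂ) + ∑ i, α i * ((ξ i : ℤ) : ℂ)} with hFdef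
    have hmem : ∀ j, j₀ ≤ j → ((τf j : ℂ) + ∑ i, α i * ((ξf j i : ℤ) : ℂ)) ∈ F :=
      fun j hj => ⟨τf j, ξf j, hb j hj, rfl⟩
    have hne : F.Nonempty := ⟨_, hmem j₀ le_rfl⟩
    obtain ⟨z₀, hz₀F, hz₀min⟩ :=
      Set.exists_min_image F (fun z => ‖z - lam‖) hFfin hne
    have hδ : 0 < ‖z₀ - lam‖ := by
      obtain ⟨τ, ξ, _, rfl⟩ := hz₀F
      have hne' : (τ : ℂ) + ∑ i, α i * ((ξ i : ℤ) : ℂ) ≠ lam := fun he => hl ⟨τ, ξ, he.symm⟩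
      simpa [sub_eq_zero] using hne'
    obtain ⟨n, hn⟩ := exists_pow_lt_of_lt_one hδ (by norm_num : (1 / 2 : ℝ) < 1)
    set j : ℕ := max n j₀ with hjdef
    have hjj₀ : j₀ ≤ j := le_max_right _ _
    have hs2 : (2 : ℝ) ≤ s j := two_le_size (h1 j)
    have hw : ‖((τf j : ℂ) + ∑ i, α i * ((ξf j i : ℤ) : ℂ)) - lam‖
        < (s j) ^ (-(j : ℝ)) := h2 j
    have hle : (s j) ^ (-(j : ℝ)) ≤ (2 : ℝ) ^ (-(j : ℝ)) :=
      Real.rpow_le_rpow_of_nonpos (by norm_num) hs2 (neg_nonpos.mpr (Nat.cast_nonneg j))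
    have h2pow : (2 : ℝ) ^ (-(j : ℝ)) = (1 / 2 : ℝ) ^ j := by
      rw [Real.rpow_neg (by norm_num), Real.rpow_natCast, one_div, inv_pow]
    have hmono : (1 / 2 : ℝ) ^ j ≤ (1 / 2 : ℝ) ^ n :=
      pow_le_pow_of_le_one (by norm_num) (by norm_num) (le_max_left n j₀)
    have hmin := hz₀min _ (hmem j hjj₀)
    linarith
  
/-- If `L_N` is GH (i.e. `D(α, 0)` holds), then
`𝓜_N(α) = 𝓜_{N,∞}(α) ∩ (ℤ + α₁ℤ + ⋯ + α_Nℤ)ᶜ`. -/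
theorem stmt5 (N : ℕ) (hN : 1 ≤ N) (α : Fin N → ℂ) (h0 : dioph α 0) :
    {lam : ℂ | ¬ dioph α lam} = Minf α ∩ (latt α)ᶜ := by
  ext lam
  simp only [Set.mem_setOf_eq, Set.mem_inter_iff, Set.mem_compl_iff]
  constructor
  · intro h
    exact ⟨mem_Minf_of_not_dioph α h, fun hl => h (dioph_of_latt α h0 hl)⟩
  · rintro ⟨hm, hl⟩
    exact not_dioph_of_mem α hm hl
end

section
/- Let N ≥ 1 and α = (α₁,…,α_N) ∈ ℂ^N, and suppose the Diophantine condition D(α,0) fails. Then 𝓜_N(α) = 𝓜_{N,∞}(α). -/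
open Finset

/-- Integer size `> 1` means size `≥ 2`. -/
private lemma two_le_sz {N : ℕ} {τ : ℤ} {ξ : Fin N → ℤ}
    (h : 1 < (|τ| : ℝ) + ∑ i, (|ξ i| : ℝ)) :
    (2 : ℝ) ≤ (|τ| : ℝ) + ∑ i, (|ξ i| : ℝ) := by
  have he : (|τ| : ℝ) + ∑ i, (|ξ i| : ℝ) = ((|τ| + ∑ i, |ξ i| : ℤ) : ℝ) := by
    push_cast; ring
  rw [he] at h ⊢
  have h1 : (1 : ℤ) < |τ| + ∑ i, |ξ i| := by exact_mod_cast h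
  exact_mod_cast (by linarith : (2 : ℤ) ≤ |τ| + ∑ i, |ξ i|)

/-- If `λ` is a lattice point `τ₀ + α·ξ₀` and `D(α,0)` fails, then `D(α,λ)` fails. -/
private lemma not_dioph_of_lattice {N : ℕ} (α : Fin N → ℂ) (h0 : ¬ dioph α 0)
    (τ₀ : ℤ) (ξ₀ : Fin N → ℤ) {lam : ℂ} (hl : lam = (τ₀ : ℂ) + ∑ i, α i * (ξ₀ i : ℂ)) :
    ¬ dioph α lam := by
  rintro ⟨C, hC, M, hM, R, hR, hd⟩
  rw [dioph] at h0; push_neg at h0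
  set s : ℝ := (|τ₀| : ℝ) + ∑ i, (|ξ₀ i| : ℝ) with hs
  have hs0 : 0 ≤ s := by positivity
  obtain ⟨τ', ξ', hsz', hlt⟩ :=
    h0 (C * (2 : ℝ) ^ (-M)) (by positivity) M hM (R + s + 1) (by positivity)
  set sz' : ℝ := (|τ'| : ℝ) + ∑ i, (|ξ' i| : ℝ) with hsz'def
  set τ'' : ℤ := τ' + τ₀ with hτ''
  set ξ'' : Fin N → ℤ := fun i => ξ' i + ξ₀ i with hξ''
  set sz'' : ℝ := (|τ''| : ℝ) + ∑ i, (|ξ'' i| : ℝ) with hsz''def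
  have hub : sz'' ≤ sz' + s := by
    have h1 : (|τ''| : ℝ) ≤ (|τ'| : ℝ) + (|τ₀| : ℝ) := by
      exact_mod_cast abs_add_le τ' τ₀
    have h2 : ∑ i, (|ξ'' i| : ℝ) ≤ ∑ i, ((|ξ' i| : ℝ) + (|ξ₀ i| : ℝ)) :=
      Finset.sum_le_sum fun i _ => by exact_mod_cast abs_add_le (ξ' i) (ξ₀ i)
    rw [Finset.sum_add_distrib] at h2
    rw [hsz''def, hsz'def, hs]; linarith
  have hlb : sz' - s ≤ sz'' := by
    have h1 : (|(τ' : ℝ)| : ℝ) - |(τ₀ : ℝ)| ≤ (|τ''| : ℝ) := by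
      have h : |(τ' : ℝ)| ≤ |(τ' : ℝ) + (τ₀ : ℝ)| + |(τ₀ : ℝ)| := by
        have := abs_add_le ((τ' : ℝ) + (τ₀ : ℝ)) (-(τ₀ : ℝ)); simpa using this
      simp only [hτ'']; push_cast; linarith
    have h2 : ∑ i, (|(ξ' i : ℝ)| - |(ξ₀ i : ℝ)|) ≤ ∑ i, (|ξ'' i| : ℝ) := by
      refine Finset.sum_le_sum fun i _ => ?_
      have h : |(ξ' i : ℝ)| ≤ |(ξ' i : ℝ) + (ξ₀ i : ℝ)| + |(ξ₀ i : ℝ)| := by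
        have := abs_add_le ((ξ' i : ℝ) + (ξ₀ i : ℝ)) (-(ξ₀ i : ℝ)); simpa using this
      simp only [hξ'']; push_cast; linarith
    rw [Finset.sum_sub_distrib] at h2
    rw [hsz''def, hsz'def, hs]; linarith
  have hsz''R : R ≤ sz'' := by linarith
  have hkey := hd τ'' ξ'' hsz''R
  have habs : (τ'' : ℂ) + (∑ i, α i * (ξ'' i : ℂ)) - lam
      = (τ' : ℂ) + (∑ i, α i * (ξ' i : ℂ)) - 0 := by
    subst hl
    simp only [hτ'', hξ'']
    push_cast
    simp only [mul_add, Finset.sum_add_distrib]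
    ring
  rw [habs] at hkey
  have hszpos : 0 < sz' := by linarith
  have hsz''pos : 0 < sz'' := by linarith
  have h2sz : sz'' ≤ 2 * sz' := by linarith
  have hm : (2 * sz') ^ (-M) ≤ sz'' ^ (-M) :=
    Real.rpow_le_rpow_of_nonpos hsz''pos h2sz (by linarith)
  have hmul : (2 * sz') ^ (-M) = (2 : ℝ) ^ (-M) * sz' ^ (-M) :=
    Real.mul_rpow (by norm_num) hszpos.le
  have hfin : C * ((2 * sz') ^ (-M)) ≤ C * (sz'' ^ (-M)) :=
    mul_le_mul_of_nonneg_left hm hC.le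
  rw [hmul] at hfin
  have : C * (2 : ℝ) ^ (-M) * (sz' ^ (-M)) ≤ C * (sz'' ^ (-M)) := by
    rw [mul_assoc]; exact hfin
  linarith

/-- If `L_N` is not GH (i.e. `D(α, 0)` fails), then `𝓜_N(α) = 𝓜_{N,∞}(α)`. -/
theorem stmt6 (N : ℕ) (hN : 1 ≤ N) (α : Fin N → ℂ) (h0 : ¬ dioph α 0) :
    {lam : ℂ | ¬ dioph α lam} = Minf α := by
  ext lam
  simp only [Set.mem_setOf_eq, Minf, Set.mem_iInter, Set.mem_iUnion, Set.mem_setOf_eq]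
  constructor
  · -- ¬ dioph → Minf
    intro hnd j
    rw [dioph] at hnd; push_neg at hnd
    obtain ⟨τ, ξ, hsz, hlt⟩ := hnd 1 one_pos ((j : ℝ) + 1) (by positivity) 2 two_pos
    refine ⟨τ, ξ, by linarith, ?_⟩
    have hmono : ((|τ| : ℝ) + ∑ i, (|ξ i| : ℝ)) ^ (-((j : ℝ) + 1))
        ≤ ((|τ| : ℝ) + ∑ i, (|ξ i| : ℝ)) ^ (-(j : ℝ)) :=
      Real.rpow_le_rpow_of_exponent_le (by linarith) (by linarith)
    rw [one_mul] at hlt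
    linarith
  · -- Minf → ¬ dioph
    intro hm
    by_cases hlat : ∃ τ₀ : ℤ, ∃ ξ₀ : Fin N → ℤ, lam = (τ₀ : ℂ) + ∑ i, α i * (ξ₀ i : ℂ)
    · obtain ⟨τ₀, ξ₀, h⟩ := hlat
      exact not_dioph_of_lattice α h0 τ₀ ξ₀ h
    · push_neg at hlat
      rintro ⟨C, hC, M, hM, R, hR, hd⟩
      set K : ℝ := max R 2 with hK
      set S : Set (ℤ × (Fin N → ℤ)) := {p | (|p.1| : ℝ) + ∑ i, (|p.2 i| : ℝ) ≤ K} with hSdef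
      have hSfin : S.Finite := by
        apply Set.Finite.subset
          ((Set.finite_Icc (-⌈K⌉) ⌈K⌉).prod
            (Set.finite_Icc ((fun _ => -⌈K⌉) : Fin N → ℤ) (fun _ => ⌈K⌉)))
        rintro ⟨τ, ξ⟩ hp
        simp only [hSdef, Set.mem_setOf_eq] at hp
        have hsum0 : (0 : ℝ) ≤ ∑ i, (|ξ i| : ℝ) := by positivity
        have hτabs : (|τ| : ℝ) ≤ K := by linarith
        have hτZ : |τ| ≤ ⌈K⌉ := by exact_mod_cast hτabs.trans (Int.le_ceil K)
        have hξZ : ∀ i, |ξ i| ≤ ⌈K⌉ := by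
          intro i
          have h1 : (|ξ i| : ℝ) ≤ ∑ i, (|ξ i| : ℝ) :=
            Finset.single_le_sum (f := fun i => (|ξ i| : ℝ))
              (fun i _ => by positivity) (Finset.mem_univ i)
          have h2 : (0 : ℝ) ≤ (|τ| : ℝ) := by positivity
          have : (|ξ i| : ℝ) ≤ K := by linarith
          exact_mod_cast this.trans (Int.le_ceil K)
        exact ⟨Set.mem_Icc.mpr ⟨(abs_le.mp hτZ).1, (abs_le.mp hτZ).2⟩,
          Set.mem_Icc.mpr ⟨fun i => (abs_le.mp (hξZ i)).1, fun i => (abs_le.mp (hξZ i)).2⟩⟩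
      set T : Set ℂ := (fun p : ℤ × (Fin N → ℤ) => (p.1 : ℂ) + ∑ i, α i * (p.2 i : ℂ)) '' S
        with hTdef
      have hTfin : T.Finite := hSfin.image _
      have hlamT : lam ∉ T := by
        rintro ⟨p, -, hp⟩
        exact hlat p.1 p.2 hp.symm
      obtain ⟨ε, hε, hball⟩ := Metric.isOpen_iff.mp hTfin.isClosed.isOpen_compl lam hlamT
      obtain ⟨n, hn⟩ := exists_nat_ge M
      obtain ⟨m₁, hm₁⟩ := pow_unbounded_of_one_lt (1 / C) (one_lt_two (α := ℝ))
      obtain ⟨m₂, hm₂⟩ := pow_unbounded_of_one_lt (1 / ε) (one_lt_two (α := ℝ))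
      set j : ℕ := n + m₁ + m₂ with hj
      obtain ⟨τ, ξ, hsz1, hlt⟩ := hm j
      set sz : ℝ := (|τ| : ℝ) + ∑ i, (|ξ i| : ℝ) with hszdef
      have hsz2 : (2 : ℝ) ≤ sz := two_le_sz hsz1
      have hjcast : (j : ℝ) = (n : ℝ) + m₁ + m₂ := by rw [hj]; push_cast; ring
      by_cases hbig : K ≤ sz
      · -- large point: contradiction with the dioph bound
        have hdb := hd τ ξ (le_trans (le_max_left R 2) hbig)
        have h1 : C * sz ^ (-M) < sz ^ (-(j : ℝ)) := lt_of_le_of_lt hdb hlt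
        have h2 : sz ^ (-(j : ℝ)) ≤ sz ^ (-(m₁ : ℝ) + -M) := by
          apply Real.rpow_le_rpow_of_exponent_le (by linarith)
          rw [hjcast]
          have : (0 : ℝ) ≤ m₂ := by positivity
          linarith
        rw [Real.rpow_add (by linarith : (0:ℝ) < sz)] at h2
        have hqpos : (0 : ℝ) < sz ^ (-M) := Real.rpow_pos_of_pos (by linarith) _
        have h3 : C < sz ^ (-(m₁ : ℝ)) := by
          have := lt_of_lt_of_le h1 h2
          exact lt_of_mul_lt_mul_right this hqpos.le
        have h4 : sz ^ (-(m₁ : ℝ)) ≤ (2 : ℝ) ^ (-(m₁ : ℝ)) := by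
          apply Real.rpow_le_rpow_of_nonpos two_pos hsz2
          simp [neg_nonpos]
        have h5 : (2 : ℝ) ^ (-(m₁ : ℝ)) = ((2 : ℝ) ^ m₁)⁻¹ := by
          rw [Real.rpow_neg (by norm_num), Real.rpow_natCast]
        have hp1 : (0 : ℝ) < 2 ^ m₁ := by positivity
        have hCub : C < ((2 : ℝ) ^ m₁)⁻¹ := by rw [← h5]; linarith
        have hinv : ((2 : ℝ) ^ m₁)⁻¹ * (2 : ℝ) ^ m₁ = 1 := inv_mul_cancel₀ (ne_of_gt hp1)
        rw [div_lt_iff₀ hC] at hm₁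
        nlinarith
      · -- small point: contradicts the ε-ball around lam avoiding T
        push_neg at hbig
        have hpS : ((τ, ξ) : ℤ × (Fin N → ℤ)) ∈ S := by
          simp only [hSdef, Set.mem_setOf_eq]
          exact le_of_lt hbig
        have hzT : ((τ : ℂ) + ∑ i, α i * (ξ i : ℂ)) ∈ T := ⟨(τ, ξ), hpS, rfl⟩
        have hd1 : sz ^ (-(j : ℝ)) ≤ (2 : ℝ) ^ (-(j : ℝ)) := by
          apply Real.rpow_le_rpow_of_nonpos two_pos hsz2
          simp [neg_nonpos]
        have hd2 : (2 : ℝ) ^ (-(j : ℝ)) ≤ (2 : ℝ) ^ (-(m₂ : ℝ)) := by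
          apply Real.rpow_le_rpow_of_exponent_le one_le_two
          rw [hjcast]
          have hn0 : (0 : ℝ) ≤ n := by positivity
          have hm10 : (0 : ℝ) ≤ m₁ := by positivity
          linarith
        have hd3 : (2 : ℝ) ^ (-(m₂ : ℝ)) = ((2 : ℝ) ^ m₂)⁻¹ := by
          rw [Real.rpow_neg (by norm_num), Real.rpow_natCast]
        have hp2 : (0 : ℝ) < 2 ^ m₂ := by positivity
        have hd4 : ((2 : ℝ) ^ m₂)⁻¹ < ε := by
          rw [div_lt_iff₀ hε] at hm₂
          rw [inv_lt_iff_one_lt_mul₀ hp2]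
          linarith
        have hdist : ((τ : ℂ) + ∑ i, α i * (ξ i : ℂ)) ∈ Metric.ball lam ε := by
          rw [Metric.mem_ball, Complex.dist_eq]
          calc ‖(τ : ℂ) + ∑ i, α i * (ξ i : ℂ) - lam‖
              < sz ^ (-(j : ℝ)) := hlt
            _ ≤ (2 : ℝ) ^ (-(j : ℝ)) := hd1
            _ ≤ (2 : ℝ) ^ (-(m₂ : ℝ)) := hd2
            _ = ((2 : ℝ) ^ m₂)⁻¹ := hd3
            _ < ε := hd4
        exact hball hdist hzT
end

section
/- Let N ≥ 2 and suppose all coefficients α₁,…,α_N are real, and that there exists k ∈ {1,…,N} with α_k irrational. Then 𝓜_N(α) is contained in ℝ and, viewed as a subset of ℝ, it is a dense G_δ subset of ℝ (in particular a comeager subset of ℝ). -/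
open Finset

/-- The `n`-th witness of failure of the Diophantine condition. -/
def bad {N : ℕ} (α : Fin N → ℂ) (n : ℕ) (lam : ℂ) : Prop :=
  ∃ (τ : ℤ) (ξ : Fin N → ℤ), (n : ℝ) ≤ (|τ| : ℝ) + ∑ j, (|ξ j| : ℝ) ∧
    ‖(τ : ℂ) + (∑ j, α j * (ξ j : ℂ)) - lam‖ <
      (1 / (n : ℝ)) * (((|τ| : ℝ) + ∑ j, (|ξ j| : ℝ)) ^ (-(n : ℝ)))

lemma not_dioph_iff {N : ℕ} (α : Fin N → ℂ) (lam : ℂ) :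
    ¬ dioph α lam ↔ ∀ n : ℕ, 1 ≤ n → bad α n lam := by
  constructor
  · intro h n hn
    by_contra hb
    apply h
    have hn' : (0 : ℝ) < n := by exact_mod_cast hn
    refine ⟨1 / (n : ℝ), by positivity, (n : ℝ), hn', (n : ℝ), hn', ?_⟩
    intro τ ξ hR
    by_contra hlt
    push_neg at hlt
    exact hb ⟨τ, ξ, hR, hlt⟩
  · intro h hd
    obtain ⟨C, hC, M, hM, R, hR, H⟩ := hd
    obtain ⟨n, hn⟩ := exists_nat_ge (max (max (1 / C) M) (max R 1))
    have h1C : 1 / C ≤ (n : ℝ) := le_trans ((le_max_left _ _).trans (le_max_left _ _)) hn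
    have hMn : M ≤ (n : ℝ) := le_trans ((le_max_right _ _).trans (le_max_left _ _)) hn
    have hRn : R ≤ (n : ℝ) := le_trans ((le_max_left _ _).trans (le_max_right _ _)) hn
    have hn1 : (1 : ℝ) ≤ n := le_trans ((le_max_right _ _).trans (le_max_right _ _)) hn
    obtain ⟨τ, ξ, hsum, hlt⟩ := h n (by exact_mod_cast hn1)
    have hsum1 : (1 : ℝ) ≤ (|τ| : ℝ) + ∑ j, (|ξ j| : ℝ) := hn1.trans hsum
    have key := H τ ξ (hRn.trans hsum)
    have hpos : (0 : ℝ) < n := lt_of_lt_of_le one_pos hn1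
    have h1n : 1 / (n : ℝ) ≤ C := by
      rw [div_le_iff₀ hpos]
      have h2 := (div_le_iff₀ hC).mp h1C
      nlinarith
    have hpow : ((|τ| : ℝ) + ∑ j, (|ξ j| : ℝ)) ^ (-(n : ℝ)) ≤
        ((|τ| : ℝ) + ∑ j, (|ξ j| : ℝ)) ^ (-M) :=
      Real.rpow_le_rpow_of_exponent_le hsum1 (by linarith)
    have hmul : (1 / (n : ℝ)) * (((|τ| : ℝ) + ∑ j, (|ξ j| : ℝ)) ^ (-(n : ℝ))) ≤
        C * (((|τ| : ℝ) + ∑ j, (|ξ j| : ℝ)) ^ (-M)) :=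
      mul_le_mul h1n hpow (le_of_lt (Real.rpow_pos_of_pos (by linarith) _)) hC.le
    linarith

/-- The set of real `x` satisfying `bad α n`. -/
def Tset {N : ℕ} (α : Fin N → ℂ) (n : ℕ) : Set ℝ := {x | bad α n (x : ℂ)}

lemma isOpen_Tset {N : ℕ} (α : Fin N → ℂ) (n : ℕ) : IsOpen (Tset α n) := by
  have hrw : Tset α n = ⋃ p : ℤ × (Fin N → ℤ),
      {x : ℝ | (n : ℝ) ≤ (|p.1| : ℝ) + ∑ j, (|p.2 j| : ℝ) ∧
        ‖(p.1 : ℂ) + (∑ j, α j * (p.2 j : ℂ)) - (x : ℂ)‖ <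
          (1 / (n : ℝ)) * (((|p.1| : ℝ) + ∑ j, (|p.2 j| : ℝ)) ^ (-(n : ℝ)))} := by
    ext x
    simp only [Tset, bad, Set.mem_setOf_eq, Set.mem_iUnion, Prod.exists]
  rw [hrw]
  refine isOpen_iUnion fun p => ?_
  by_cases hc : (n : ℝ) ≤ (|p.1| : ℝ) + ∑ j, (|p.2 j| : ℝ)
  · have : {x : ℝ | (n : ℝ) ≤ (|p.1| : ℝ) + ∑ j, (|p.2 j| : ℝ) ∧
        ‖(p.1 : ℂ) + (∑ j, α j * (p.2 j : ℂ)) - (x : ℂ)‖ <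
          (1 / (n : ℝ)) * (((|p.1| : ℝ) + ∑ j, (|p.2 j| : ℝ)) ^ (-(n : ℝ)))} =
        {x : ℝ | ‖(p.1 : ℂ) + (∑ j, α j * (p.2 j : ℂ)) - (x : ℂ)‖ <
          (1 / (n : ℝ)) * (((|p.1| : ℝ) + ∑ j, (|p.2 j| : ℝ)) ^ (-(n : ℝ)))} := by
      ext x; simp [hc]
    rw [this]
    exact isOpen_lt (continuous_norm.comp (continuous_const.sub Complex.continuous_ofReal)) continuous_const
  · have : {x : ℝ | (n : ℝ) ≤ (|p.1| : ℝ) + ∑ j, (|p.2 j| : ℝ) ∧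
        ‖(p.1 : ℂ) + (∑ j, α j * (p.2 j : ℂ)) - (x : ℂ)‖ <
          (1 / (n : ℝ)) * (((|p.1| : ℝ) + ∑ j, (|p.2 j| : ℝ)) ^ (-(n : ℝ)))} = ∅ := by
      ext x; simp [hc]
    rw [this]; exact isOpen_empty

lemma dense_Tset {N : ℕ} (α : Fin N → ℂ) (hre : ∀ j, (α j).im = 0) (k : Fin N)
    (hk : Irrational (α k).re) (n : ℕ) (hn : 1 ≤ n) : Dense (Tset α n) := by
  set β := (α k).re with hβdef
  have hβ : Irrational ((n : ℝ) * β) := hk.natCast_mul (by omega)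
  set G : AddSubgroup ℝ := AddSubgroup.zmultiples (1 : ℝ) ⊔ AddSubgroup.zmultiples ((n : ℝ) * β)
    with hGdef
  have hG : Dense (G : Set ℝ) := by
    rcases AddSubgroup.dense_or_cyclic G with h | ⟨a, ha⟩
    · exact h
    · exfalso
      have h1 : (1 : ℝ) ∈ G := AddSubgroup.mem_sup_left (AddSubgroup.mem_zmultiples 1)
      have h2 : (n : ℝ) * β ∈ G := AddSubgroup.mem_sup_right (AddSubgroup.mem_zmultiples _)
      rw [ha, AddSubgroup.mem_closure_singleton] at h1 h2
      obtain ⟨p, hp⟩ := h1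
      obtain ⟨q, hq⟩ := h2
      rw [zsmul_eq_mul] at hp hq
      have hp0 : p ≠ 0 := by rintro rfl; simp at hp
      exact hβ ⟨(q : ℚ) / (p : ℚ), by
        push_cast
        rw [div_eq_iff (by exact_mod_cast hp0)]
        linear_combination (p : ℝ) * hq - (q : ℝ) * hp⟩
  rw [dense_iff_inter_open]
  intro U hU hUne
  have hIC : IsClosed (Set.range ((↑) : ℤ → ℝ)) := Int.isClosedEmbedding_coe_real.isClosed_range
  have hopen : IsOpen (U \ Set.range ((↑) : ℤ → ℝ)) := hU.sdiff hIC
  have hne' : (U \ Set.range ((↑) : ℤ → ℝ)).Nonempty := by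
    obtain ⟨y, hy, hyU⟩ := dense_irrational.exists_mem_open hU hUne
    exact ⟨y, hyU, by rintro ⟨m, rfl⟩; exact hy.ne_int m rfl⟩
  obtain ⟨g, hgG, hgU⟩ := hG.exists_mem_open hopen hne'
  obtain ⟨y, hy, z, hz, hyz⟩ := AddSubgroup.mem_sup.mp hgG
  obtain ⟨τ, rfl⟩ := AddSubgroup.mem_zmultiples_iff.mp hy
  obtain ⟨m, rfl⟩ := AddSubgroup.mem_zmultiples_iff.mp hz
  have hm0 : m ≠ 0 := by
    rintro rfl
    exact hgU.2 ⟨τ, by simpa using hyz⟩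
  refine ⟨g, hgU.1, ?_⟩
  -- show g ∈ Tset α n
  set ξ₀ : Fin N → ℤ := Pi.single k (m * (n : ℤ)) with hξ₀
  have hsum : ∑ j, (|ξ₀ j| : ℝ) = |(m : ℝ) * ((n : ℤ) : ℝ)| := by
    rw [Finset.sum_eq_single k]
    · simp [hξ₀]
    · intro j _ hj; simp [hξ₀, Pi.single_eq_of_ne hj]
    · simp [hξ₀]
  have habs : |(m : ℝ) * ((n : ℤ) : ℝ)| = |(m : ℝ)| * (n : ℝ) := by
    rw [abs_mul]; push_cast; rw [abs_of_nonneg (by positivity : (0 : ℝ) ≤ (n : ℝ))]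
  have hm1 : (1 : ℝ) ≤ |(m : ℝ)| := by exact_mod_cast Int.one_le_abs hm0
  have hnn : (0 : ℝ) ≤ (n : ℝ) := by positivity
  refine ⟨τ, ξ₀, ?_, ?_⟩
  · rw [hsum, habs]
    have htau : (0 : ℝ) ≤ (|τ| : ℝ) := by positivity
    nlinarith
  · have hsum2 : ∑ j, α j * ((ξ₀ j : ℤ) : ℂ) = α k * ((m * (n : ℤ) : ℤ) : ℂ) := by
      rw [Finset.sum_eq_single k]
      · simp [hξ₀]
      · intro j _ hj; simp [hξ₀, Pi.single_eq_of_ne hj]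
      · simp [hξ₀]
    have hαk : α k = (β : ℂ) := Complex.ext (by simp [hβdef]) (by simp [hre k])
    have hg : g = (τ : ℝ) + (m : ℝ) * ((n : ℝ) * β) := by
      rw [← hyz]; push_cast [zsmul_eq_mul]; ring
    have hzero : (τ : ℂ) + (∑ j, α j * ((ξ₀ j : ℤ) : ℂ)) - (g : ℂ) = 0 := by
      rw [hsum2, hαk, hg]
      push_cast
      ring
    rw [hzero]
    simp only [norm_zero]
    have hpos : (0 : ℝ) < (|τ| : ℝ) + ∑ j, (|ξ₀ j| : ℝ) := by
      rw [hsum, habs]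
      have htau : (0 : ℝ) ≤ (|τ| : ℝ) := by positivity
      have hn' : (0 : ℝ) < (n : ℝ) := by exact_mod_cast hn
      nlinarith
    have hn' : (0 : ℝ) < (n : ℝ) := by exact_mod_cast hn
    positivity

/-- If all coefficients are real and at least one is irrational, then `𝓜_N(α)` is
contained in `ℝ` and, viewed as a subset of `ℝ`, it is a dense `G_δ`
(hence comeager) subset of `ℝ`. -/
theorem stmt8 (N : ℕ) (hN : 2 ≤ N) (α : Fin N → ℂ)
    (hre : ∀ j, (α j).im = 0) (k : Fin N) (hk : Irrational (α k).re) :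
    {lam : ℂ | ¬ dioph α lam} ⊆ {z : ℂ | z.im = 0} ∧
      Dense {x : ℝ | ¬ dioph α (x : ℂ)} ∧ IsGδ {x : ℝ | ¬ dioph α (x : ℂ)} := by
  have hset : {x : ℝ | ¬ dioph α (x : ℂ)} = ⋂ m : ℕ, Tset α (m + 1) := by
    ext x
    simp only [Set.mem_setOf_eq, Set.mem_iInter, not_dioph_iff α]
    constructor
    · intro h m
      exact h (m + 1) (by omega)
    · intro h n hn
      obtain ⟨m, rfl⟩ := Nat.exists_eq_add_of_le hn
      simpa [Nat.add_comm, Tset] using h m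
  refine ⟨?_, ?_, ?_⟩
  · intro lam hlam
    by_contra him
    simp only [Set.mem_setOf_eq] at him hlam
    apply hlam
    refine ⟨|lam.im|, abs_pos.mpr him, 1, one_pos, 1, one_pos, ?_⟩
    intro τ ξ hR
    have him' : ((τ : ℂ) + (∑ j, α j * (ξ j : ℂ)) - lam).im = -lam.im := by
      simp [Complex.add_im, Complex.sub_im, Complex.im_sum, Complex.mul_im, hre]
    calc |lam.im| * (((|τ| : ℝ) + ∑ j, (|ξ j| : ℝ)) ^ (-(1 : ℝ)))
        ≤ |lam.im| * 1 := by
          refine mul_le_mul_of_nonneg_left ?_ (abs_nonneg _)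
          exact Real.rpow_le_one_of_one_le_of_nonpos hR (by norm_num)
      _ = |lam.im| := mul_one _
      _ = |((τ : ℂ) + (∑ j, α j * (ξ j : ℂ)) - lam).im| := by rw [him', abs_neg]
      _ ≤ ‖(τ : ℂ) + (∑ j, α j * (ξ j : ℂ)) - lam‖ := Complex.abs_im_le_norm _
  · rw [hset]
    exact dense_iInter_of_isOpen_nat (fun m => isOpen_Tset α (m + 1))
      (fun m => dense_Tset α hre k hk (m + 1) (by omega))
  · rw [hset]
    exact IsGδ.iInter_of_isOpen fun m => isOpen_Tset α (m + 1)
end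

section
/- Let N ≥ 2 and suppose each coefficient is rational: α_j = p_j/q_j with p_j ∈ ℤ, q_j ∈ ℕ, q_j ≥ 1, gcd(p_j,q_j) = 1 (with p_j = 0, q_j = 1 when α_j = 0). Set Q = q₁⋯q_N and Q_j = Q/q_j. Then 𝓜_N(α) = (d/Q)·ℤ, where d = gcd(Q, p₁Q₁, …, p_N Q_N); that is, for λ ∈ ℂ the condition D(α,λ) fails if and only if Qλ ∈ d·ℤ. -/
open Finset

lemma bezout_finset {ι : Type*} [DecidableEq ι] (s : Finset ι) (f : ι → ℤ) :
    ∃ c : ι → ℤ, ∑ j ∈ s, c j * f j = s.gcd f := by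
  induction s using Finset.induction_on with
  | empty => exact ⟨0, by simp⟩
  | @insert a s ha ih =>
    obtain ⟨c, hc⟩ := ih
    refine ⟨fun j => if j = a then Int.gcdA (f a) (s.gcd f)
      else Int.gcdB (f a) (s.gcd f) * c j, ?_⟩
    rw [Finset.sum_insert ha, Finset.gcd_insert, ← Int.coe_gcd, Int.gcd_eq_gcd_ab]
    simp only []
    have h2 : ∑ j ∈ s, (if j = a then Int.gcdA (f a) (s.gcd f)
        else Int.gcdB (f a) (s.gcd f) * c j) * f j
        = Int.gcdB (f a) (s.gcd f) * ∑ j ∈ s, c j * f j := by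
      rw [Finset.mul_sum]
      refine Finset.sum_congr rfl fun j hj => ?_
      have : j ≠ a := fun h => ha (h ▸ hj)
      rw [if_neg this, mul_assoc]
    rw [h2, hc, if_pos trivial]
    ring


/-- If every coefficient is rational, `α_j = p_j / q_j` in lowest terms, then with
`Q = q₁⋯q_N`, `Q_j = Q/q_j` and `d = gcd(Q, p₁Q₁, …, p_N Q_N)` we have
`𝓜_N(α) = (d/Q)·ℤ`: `D(α, λ)` fails iff `Qλ ∈ dℤ`. -/
theorem stmt9 (N : ℕ) (hN : 2 ≤ N) (α : Fin N → ℂ)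
    (p : Fin N → ℤ) (q : Fin N → ℕ) (hq : ∀ j, 1 ≤ q j)
    (hgcd : ∀ j, Int.gcd (p j) ((q j : ℤ)) = 1)
    (hα : ∀ j, α j = (p j : ℂ) / (q j : ℂ)) :
    {lam : ℂ | ¬ dioph α lam} =
      {lam : ℂ | ∃ m : ℤ,
        ((∏ j, q j : ℕ) : ℂ) * lam =
          ((Int.gcd ((∏ j, q j : ℕ) : ℤ)
            (Finset.univ.gcd fun j => p j * ((∏ i ∈ Finset.univ.erase j, q i : ℕ) : ℤ)) : ℕ) : ℂ)
            * (m : ℂ)} := by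

  ext lam
  simp only [Set.mem_setOf_eq]
  set Q : ℕ := ∏ j, q j with hQ
  set QQ : Fin N → ℤ := fun j => ((∏ i ∈ Finset.univ.erase j, q i : ℕ) : ℤ) with hQQ
  set G : ℤ := Finset.univ.gcd (fun j => p j * QQ j) with hG
  set d : ℕ := Int.gcd (Q : ℤ) G with hd
  have hQpos : 0 < Q := Finset.prod_pos fun j _ => hq j
  have hQj : ∀ j, (Q : ℤ) = (q j : ℤ) * QQ j := by
    intro j
    rw [hQ, hQQ]
    push_cast
    rw [← Finset.mul_prod_erase _ _ (Finset.mem_univ j)]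
  have hqC : ∀ j, ((q j : ℂ)) ≠ 0 := fun j => by
    exact_mod_cast Nat.cast_ne_zero.mpr (Nat.one_le_iff_ne_zero.mp (hq j))
  have hQC : ((Q : ℂ)) ≠ 0 := Nat.cast_ne_zero.mpr hQpos.ne'
  have hQR : (0 : ℝ) < (Q : ℝ) := by exact_mod_cast hQpos
  have hαQ : ∀ j, (Q : ℂ) * α j = ((p j * QQ j : ℤ) : ℂ) := by
    intro j
    have h1 : ((Q : ℕ) : ℂ) = (q j : ℂ) * ((QQ j : ℤ) : ℂ) := by exact_mod_cast hQj j
    push_cast at h1 ⊢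
    rw [h1, hα j]
    field_simp
    calc (q j : ℂ) * (QQ j : ℂ) * (p j : ℂ) * ((q j : ℂ))⁻¹
        = (QQ j : ℂ) * (p j : ℂ) * ((q j : ℂ) * ((q j : ℂ))⁻¹) := by ring
      _ = (QQ j : ℂ) * (p j : ℂ) := by rw [mul_inv_cancel₀ (hqC j), mul_one]
      _ = (p j : ℂ) * (QQ j : ℂ) := mul_comm _ _
    exact mul_comm _ _
  have key : ∀ (τ : ℤ) (ξ : Fin N → ℤ),
      (((τ : ℂ) + (∑ j, α j * (ξ j : ℂ)) - lam)) * (Q : ℂ)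
        = ((τ * (Q : ℤ) + ∑ j, ξ j * (p j * QQ j) : ℤ) : ℂ) - (Q : ℂ) * lam := by
    intro τ ξ
    have h1 : (∑ j, α j * (ξ j : ℂ)) * (Q : ℂ) = ∑ j, (ξ j : ℂ) * ((p j * QQ j : ℤ) : ℂ) := by
      rw [Finset.sum_mul]
      refine Finset.sum_congr rfl fun j _ => ?_
      calc α j * (ξ j : ℂ) * (Q : ℂ) = (ξ j : ℂ) * ((Q : ℂ) * α j) := by ring
        _ = (ξ j : ℂ) * ((p j * QQ j : ℤ) : ℂ) := by rw [hαQ j]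
    rw [sub_mul, add_mul, h1]
    push_cast
    ring
  -- divisibility of all lattice values by d
  have hdvd : ∀ (τ : ℤ) (ξ : Fin N → ℤ), (d : ℤ) ∣ (τ * (Q : ℤ) + ∑ j, ξ j * (p j * QQ j)) := by
    intro τ ξ
    have h1 : (d : ℤ) ∣ (Q : ℤ) := Int.gcd_dvd_left _ _
    have h2 : (d : ℤ) ∣ G := Int.gcd_dvd_right _ _
    refine dvd_add (h1.mul_left τ) (Finset.dvd_sum fun j _ => ?_)
    exact ((h2.trans (Finset.gcd_dvd (Finset.mem_univ j))).mul_left (ξ j))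
  -- Bezout: d is attained
  have hrep : ∃ (τ₀ : ℤ) (ξ₀ : Fin N → ℤ),
      τ₀ * (Q : ℤ) + ∑ j, ξ₀ j * (p j * QQ j) = (d : ℤ) := by
    obtain ⟨c, hc⟩ := bezout_finset Finset.univ (fun j => p j * QQ j)
    refine ⟨Int.gcdA (Q : ℤ) G, fun j => Int.gcdB (Q : ℤ) G * c j, ?_⟩
    have hb := Int.gcd_eq_gcd_ab (Q : ℤ) G
    have h2 : ∑ j, (Int.gcdB (Q : ℤ) G * c j) * (p j * QQ j)
        = Int.gcdB (Q : ℤ) G * G := by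
      rw [hG, ← hc, Finset.mul_sum]
      exact Finset.sum_congr rfl fun j _ => by ring
    rw [h2, ← hd] at *
    linarith [hb]
  constructor
  · -- ¬dioph → ∃ m ; by contraposition
    intro hnd
    by_contra hm
    push_neg at hm
    apply hnd
    -- D holds
    set z : ℂ := (Q : ℂ) * lam with hz
    set m₀ : ℤ := round (z.re / d) with hm₀
    have hdpos : 0 < d := by
      rw [hd]
      rcases Nat.eq_zero_or_pos (Int.gcd (Q : ℤ) G) with h | h
      · exfalso
        have := Int.gcd_eq_zero_iff.mp h
        exact (Nat.cast_ne_zero.mpr hQpos.ne' : (Q : ℤ) ≠ 0) this.1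
      · exact h
    have hdR : (0 : ℝ) < (d : ℝ) := by exact_mod_cast hdpos
    set δ : ℝ := ‖z - ((d : ℂ) * (m₀ : ℂ))‖ with hδ
    have hδpos : 0 < δ := by
      rw [hδ]
      refine norm_pos_iff.mpr (sub_ne_zero.mpr ?_)
      exact hm m₀
    have hδle : ∀ n : ℤ, (d : ℤ) ∣ n → δ ≤ ‖z - (n : ℂ)‖ := by
      intro n hn
      obtain ⟨k, hk⟩ := hn
      subst hk
      have hre : |z.re - (d : ℝ) * m₀| ≤ |z.re - (d : ℝ) * k| := by
        have h1 := round_le (z.re / (d : ℝ)) k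
        rw [← hm₀] at h1
        have h2 : z.re / (d : ℝ) - m₀ = (z.re - d * m₀) / d := by field_simp
        have h3 : z.re / (d : ℝ) - k = (z.re - d * k) / d := by field_simp
        rw [h2, h3, abs_div, abs_div, abs_of_pos hdR] at h1
        have h4 := mul_le_mul_of_nonneg_right h1 hdR.le
        rwa [div_mul_cancel₀ _ hdR.ne', div_mul_cancel₀ _ hdR.ne'] at h4
      have him : (z - ((d : ℂ) * (m₀ : ℂ))).im = (z - (((d : ℤ) * k : ℤ) : ℂ)).im := by
        simp [Complex.sub_im]
      have hre2 : (z - ((d : ℂ) * (m₀ : ℂ))).re = z.re - (d : ℝ) * m₀ := by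
        simp [Complex.sub_re]
      have hre3 : (z - (((d : ℤ) * k : ℤ) : ℂ)).re = z.re - (d : ℝ) * k := by
        push_cast
        simp [Complex.sub_re]
      rw [hδ]
      have habs : ∀ w : ℂ, ‖w‖ = Real.sqrt (w.re ^ 2 + w.im ^ 2) := by
        intro w
        rw [Complex.norm_eq_sqrt_sq_add_sq]
      rw [habs, habs]
      apply Real.sqrt_le_sqrt
      rw [hre2, hre3, ← him]
      have := mul_self_le_mul_self (abs_nonneg _) hre
      rw [abs_mul_abs_self, abs_mul_abs_self] at this
      nlinarith [this]
    refine ⟨δ / Q, div_pos hδpos hQR, 1, one_pos, 1, one_pos, ?_⟩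
    intro τ ξ hS
    set S : ℝ := (|τ| : ℝ) + ∑ j, (|ξ j| : ℝ) with hSdef
    have habs1 : ‖(τ : ℂ) + (∑ j, α j * (ξ j : ℂ)) - lam‖ * (Q : ℝ)
        = ‖((τ * (Q : ℤ) + ∑ j, ξ j * (p j * QQ j) : ℤ) : ℂ) - z‖ := by
      rw [← Complex.norm_natCast Q, ← norm_mul, key τ ξ, hz]
    have h4 : δ ≤ ‖((τ * (Q : ℤ) + ∑ j, ξ j * (p j * QQ j) : ℤ) : ℂ) - z‖ := by
      rw [norm_sub_rev]
      exact hδle _ (hdvd τ ξ)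
    have h5 : δ / Q ≤ ‖(τ : ℂ) + (∑ j, α j * (ξ j : ℂ)) - lam‖ := by
      rw [div_le_iff₀ hQR]
      linarith [habs1, h4]
    have h6 : S ^ (-(1 : ℝ)) ≤ 1 :=
      Real.rpow_le_one_of_one_le_of_nonpos hS (by norm_num)
    calc δ / Q * S ^ (-(1 : ℝ)) ≤ δ / Q * 1 := by
          apply mul_le_mul_of_nonneg_left h6 (le_of_lt (div_pos hδpos hQR))
      _ = δ / Q := mul_one _
      _ ≤ _ := h5
  · -- ∃ m → ¬dioph
    rintro ⟨m, hm⟩ ⟨C, hC, M, hM, R, hR, h⟩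
    obtain ⟨τ₀, ξ₀, h₀⟩ := hrep
    set j₀ : Fin N := ⟨0, by omega⟩ with hj₀
    set t : ℤ := |ξ₀ j₀ * m| + |⌈R⌉| + 1 with ht
    have htpos : 0 < t := by positivity
    set τ₂ : ℤ := τ₀ * m - p j₀ * t with hτ₂
    set ξ₂ : Fin N → ℤ := fun j => ξ₀ j * m + if j = j₀ then (q j₀ : ℤ) * t else 0 with hξ₂
    -- the lattice value is d * m
    have hnum : τ₂ * (Q : ℤ) + ∑ j, ξ₂ j * (p j * QQ j) = (d : ℤ) * m := by
      have hsum : ∑ j, ξ₂ j * (p j * QQ j)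
          = (∑ j, (ξ₀ j * m) * (p j * QQ j)) + (q j₀ : ℤ) * t * (p j₀ * QQ j₀) := by
        rw [hξ₂]
        simp only [add_mul, Finset.sum_add_distrib]
        congr 1
        simp only [ite_mul, zero_mul]
        rw [Finset.sum_ite_eq' Finset.univ j₀ (fun j => (q j₀ : ℤ) * t * (p j * QQ j))]
        simp
      rw [hsum, hτ₂]
      have hsum2 : ∑ j, (ξ₀ j * m) * (p j * QQ j) = m * ∑ j, ξ₀ j * (p j * QQ j) := by
        rw [Finset.mul_sum]
        exact Finset.sum_congr rfl fun j _ => by ring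
      rw [hsum2]
      have hQj0 := hQj j₀
      linear_combination m * h₀ - p j₀ * t * hQj0
    -- the expression vanishes
    have hzero : (τ₂ : ℂ) + (∑ j, α j * (ξ₂ j : ℂ)) - lam = 0 := by
      have hk := key τ₂ ξ₂
      rw [hnum] at hk
      push_cast at hk
      rw [hm] at hk
      simp only [sub_self] at hk
      exact (mul_eq_zero.mp hk).resolve_right hQC
    -- the size is large
    have hq0 : (1 : ℤ) ≤ (q j₀ : ℤ) := by exact_mod_cast hq j₀
    have hξ2j₀ : (|⌈R⌉| + 1 : ℤ) ≤ ξ₂ j₀ := by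
      have he : ξ₂ j₀ = ξ₀ j₀ * m + (q j₀ : ℤ) * t := by simp [hξ₂]
      have h5 : t ≤ (q j₀ : ℤ) * t := le_mul_of_one_le_left htpos.le hq0
      have h6 := neg_abs_le (ξ₀ j₀ * m)
      rw [he]
      omega
    have hRceil : R ≤ ((|⌈R⌉| + 1 : ℤ) : ℝ) := by
      have h7 : (⌈R⌉ : ℝ) ≥ R := Int.le_ceil R
      have h8 : (⌈R⌉ : ℤ) ≤ |⌈R⌉| := le_abs_self _
      have h8' : ((⌈R⌉ : ℤ) : ℝ) ≤ ((|⌈R⌉| : ℤ) : ℝ) := by exact_mod_cast h8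
      push_cast at h8' ⊢
      linarith
    set S : ℝ := (|τ₂| : ℝ) + ∑ j, (|ξ₂ j| : ℝ) with hSdef
    have hterm : ((|⌈R⌉| + 1 : ℤ) : ℝ) ≤ |((ξ₂ j₀ : ℤ) : ℝ)| := by
      have h9 : (|⌈R⌉| + 1 : ℤ) ≤ |ξ₂ j₀| := le_trans hξ2j₀ (le_abs_self _)
      have h9' : ((|⌈R⌉| + 1 : ℤ) : ℝ) ≤ ((|ξ₂ j₀| : ℤ) : ℝ) := by exact_mod_cast h9
      rwa [Int.cast_abs] at h9'
    have hsingle : |((ξ₂ j₀ : ℤ) : ℝ)| ≤ ∑ j, (|ξ₂ j| : ℝ) := by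
      exact Finset.single_le_sum (f := fun j => |((ξ₂ j : ℤ) : ℝ)|)
        (fun j _ => by positivity) (Finset.mem_univ j₀)
    have hτ2nonneg : (0 : ℝ) ≤ (|τ₂| : ℝ) := by positivity
    have hSR : R ≤ S := by
      rw [hSdef]
      linarith
    have hSpos : 0 < S := lt_of_lt_of_le hR hSR
    have hle := h τ₂ ξ₂ hSR
    rw [hzero] at hle
    simp only [norm_zero] at hle
    have hpow : 0 < C * S ^ (-M) := mul_pos hC (Real.rpow_pos_of_pos hSpos _)
    rw [← hSdef] at hle
    linarith
end

section
/- Let N ≥ 1 and α = (α₁,…,α_N) ∈ ℂ^N. The set 𝓜_{N,∞}(α) is dense in ℂ if and only if the additive subgroup ℤ + α₁ℤ + ⋯ + α_Nℤ = {n₀ + α₁n₁ + ⋯ + α_Nn_N : n₀,…,n_N ∈ ℤ} is dense in ℂ. -/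
open Finset

lemma base_cast {N : ℕ} (τ : ℤ) (ξ : Fin N → ℤ) :
    ((|τ| + ∑ i, |ξ i| : ℤ) : ℝ) = (|τ| : ℝ) + ∑ i, (|ξ i| : ℝ) := by
  push_cast; ring

lemma Minf_subset_closure {N : ℕ} (α : Fin N → ℂ) : Minf α ⊆ closure (latt α) := by
  intro lam hlam
  rw [Metric.mem_closure_iff]
  intro ε hε
  obtain ⟨n, hn⟩ := exists_pow_lt_of_lt_one hε (by norm_num : (1 / 2 : ℝ) < 1)
  have hlam' := Set.mem_iInter.mp hlam n
  simp only [Set.mem_iUnion, Set.mem_setOf_eq] at hlam'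
  obtain ⟨τ, ξ, hb, hmem⟩ := hlam'
  refine ⟨(τ : ℂ) + ∑ i, α i * (ξ i : ℂ), ⟨τ, ξ, rfl⟩, ?_⟩
  have h1 : (1 : ℝ) < ((|τ| + ∑ i, |ξ i| : ℤ) : ℝ) := by rw [base_cast]; exact hb
  have h1' : (1 : ℤ) < |τ| + ∑ i, |ξ i| := by exact_mod_cast h1
  have h2 : (2 : ℝ) ≤ (|τ| : ℝ) + ∑ i, (|ξ i| : ℝ) := by
    rw [← base_cast]
    exact_mod_cast (by omega : (2 : ℤ) ≤ |τ| + ∑ i, |ξ i|)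
  have hBle : ((|τ| : ℝ) + ∑ i, (|ξ i| : ℝ)) ^ (-(n : ℝ)) ≤ (2 : ℝ) ^ (-(n : ℝ)) :=
    Real.rpow_le_rpow_of_nonpos (by norm_num) h2 (neg_nonpos.mpr (Nat.cast_nonneg n))
  have h2n : (2 : ℝ) ^ (-(n : ℝ)) = (1 / 2 : ℝ) ^ n := by
    rw [Real.rpow_neg (by norm_num), Real.rpow_natCast, one_div, inv_pow]
  have hdist : dist lam ((τ : ℂ) + ∑ i, α i * (ξ i : ℂ)) < ε := by
    rw [Complex.dist_eq, ← norm_neg, neg_sub]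
    calc ‖(τ : ℂ) + (∑ i, α i * (ξ i : ℂ)) - lam‖
        < ((|τ| : ℝ) + ∑ i, (|ξ i| : ℝ)) ^ (-(n : ℝ)) := hmem
      _ ≤ (2 : ℝ) ^ (-(n : ℝ)) := hBle
      _ = (1 / 2 : ℝ) ^ n := h2n
      _ < ε := hn
  exact hdist

lemma dense_Mj {N : ℕ} (α : Fin N → ℂ) (hd : Dense (latt α)) (j : ℕ) :
    Dense (⋃ τ : ℤ, ⋃ ξ : Fin N → ℤ, ⋃ _ : 1 < (|τ| : ℝ) + ∑ i, (|ξ i| : ℝ),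
      {lam : ℂ | ‖(τ : ℂ) + (∑ i, α i * (ξ i : ℂ)) - lam‖ <
        ((|τ| : ℝ) + ∑ i, (|ξ i| : ℝ)) ^ (-(j : ℝ))}) := by
  classical
  set S : Set ℂ := {0, 1, -1} ∪ Set.range α ∪ Set.range (fun i => -α i) with hS
  have hSfin : S.Finite := by
    apply Set.Finite.union
    apply Set.Finite.union
    · exact Set.toFinite _
    · exact Set.finite_range α
    · exact Set.finite_range _
  have hd' : Dense (latt α \ S) := hd.diff_finite hSfin
  rw [Metric.dense_iff]
  intro z ε hε
  obtain ⟨w, hwball, hwmem⟩ := Metric.dense_iff.mp hd' z ε hε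
  obtain ⟨hwlatt, hwS⟩ := hwmem
  obtain ⟨n₀, n, hw⟩ := hwlatt
  -- show the weight is > 1
  have hbig : 1 < (|n₀| : ℝ) + ∑ i, (|n i| : ℝ) := by
    by_contra hle
    push_neg at hle
    have hle' : |n₀| + ∑ i, |n i| ≤ 1 := by
      rw [← base_cast] at hle
      exact_mod_cast hle
    have hn0 : 0 ≤ |n₀| := abs_nonneg _
    have hsumnn : (0 : ℤ) ≤ ∑ i, |n i| := Finset.sum_nonneg fun i _ => abs_nonneg _
    apply hwS
    rcases eq_or_lt_of_le hn0 with h0 | h0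
    · -- |n₀| = 0
      have hn0z : n₀ = 0 := abs_eq_zero.mp h0.symm
      have hsum1 : ∑ i, |n i| ≤ 1 := by omega
      rcases eq_or_lt_of_le hsumnn with hs0 | hs0
      · -- all zero, w = 0
        have hall : ∀ i ∈ Finset.univ, |n i| = 0 :=
          (Finset.sum_eq_zero_iff_of_nonneg fun i _ => abs_nonneg _).mp hs0.symm
        have : w = 0 := by
          rw [hw, hn0z]
          simp only [Int.cast_zero, zero_add]
          apply Finset.sum_eq_zero
          intro i _
          rw [abs_eq_zero.mp (hall i (Finset.mem_univ i))]
          simp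
        rw [this, hS]
        left; left; simp
      · -- sum = 1 : some |n i| = 1, rest zero
        have hs1 : ∑ i, |n i| = 1 := le_antisymm hsum1 hs0
        have hex : ∃ i, n i ≠ 0 := by
          by_contra hc
          push_neg at hc
          have : ∑ i, |n i| = 0 := Finset.sum_eq_zero fun i _ => by rw [hc i]; simp
          omega
        obtain ⟨i, hi⟩ := hex
        have hi1 : 1 ≤ |n i| := Int.one_le_abs hi
        have hle2 : |n i| ≤ ∑ k, |n k| :=
          Finset.single_le_sum (f := fun k => |n k|) (fun k _ => abs_nonneg _)
            (Finset.mem_univ i)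
        have hni : |n i| = 1 := by omega
        have hrest : ∀ k, k ≠ i → n k = 0 := by
          intro k hk
          have hsplit : ∑ m, |n m| = |n i| + ∑ m ∈ Finset.univ.erase i, |n m| :=
            (Finset.add_sum_erase _ _ (Finset.mem_univ i)).symm
          have hz : ∑ m ∈ Finset.univ.erase i, |n m| = 0 := by omega
          have := (Finset.sum_eq_zero_iff_of_nonneg fun m _ => abs_nonneg _).mp hz k
            (Finset.mem_erase.mpr ⟨hk, Finset.mem_univ k⟩)
          exact abs_eq_zero.mp this
        have hwv : w = α i * (n i : ℂ) := by
          rw [hw, hn0z]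
          simp only [Int.cast_zero, zero_add]
          rw [Finset.sum_eq_single i]
          · intro k _ hk; rw [hrest k hk]; simp
          · intro h; exact absurd (Finset.mem_univ i) h
        rcases (abs_eq (by norm_num : (0:ℤ) ≤ 1)).mp hni with h1 | h1
        · rw [hS]; left; right
          exact ⟨i, by rw [hwv, h1]; simp⟩
        · rw [hS]; right
          exact ⟨i, by rw [hwv, h1]; push_cast; ring⟩
    · -- |n₀| ≥ 1, so |n₀| = 1 and all n i = 0
      have hn01 : |n₀| = 1 := by omega
      have hz : ∑ i, |n i| = 0 := by omega
      have hall : ∀ i ∈ Finset.univ, |n i| = 0 :=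
        (Finset.sum_eq_zero_iff_of_nonneg fun i _ => abs_nonneg _).mp hz
      have hwv : w = (n₀ : ℂ) := by
        rw [hw]
        have : ∑ k, α k * (n k : ℂ) = 0 := Finset.sum_eq_zero fun k _ => by
          rw [abs_eq_zero.mp (hall k (Finset.mem_univ k))]; simp
        rw [this, add_zero]
      rcases (abs_eq (by norm_num : (0:ℤ) ≤ 1)).mp hn01 with h1 | h1
      · rw [hS]; left; left; right; left; rw [hwv, h1]; simp
      · rw [hS]; left; left; right; right; rw [hwv, h1]; simp
  -- w is in the union (as its own center) and in the ball
  refine ⟨w, hwball, ?_⟩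
  simp only [Set.mem_iUnion, Set.mem_setOf_eq]
  refine ⟨n₀, n, hbig, ?_⟩
  rw [← hw, sub_self]
  simp only [norm_zero]
  exact Real.rpow_pos_of_pos (by linarith) _

/-- `𝓜_{N,∞}(α)` is dense in `ℂ` iff `ℤ + α₁ℤ + ⋯ + α_Nℤ` is dense in `ℂ`. -/
theorem stmt10 (N : ℕ) (hN : 1 ≤ N) (α : Fin N → ℂ) :
    Dense (Minf α) ↔ Dense (latt α) := by
  constructor
  · intro h
    have : Dense (closure (latt α)) := h.mono (Minf_subset_closure α)
    rwa [dense_closure] at this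
  · intro h
    apply dense_iInter_of_isOpen
    · intro j
      apply isOpen_iUnion; intro τ
      apply isOpen_iUnion; intro ξ
      apply isOpen_iUnion; intro _
      have : {lam : ℂ | ‖(τ : ℂ) + (∑ i, α i * (ξ i : ℂ)) - lam‖ <
          ((|τ| : ℝ) + ∑ i, (|ξ i| : ℝ)) ^ (-(j : ℝ))} =
          Metric.ball ((τ : ℂ) + (∑ i, α i * (ξ i : ℂ)))
            (((|τ| : ℝ) + ∑ i, (|ξ i| : ℝ)) ^ (-(j : ℝ))) := by
        ext lam
        simp only [Metric.mem_ball, Set.mem_setOf_eq, Complex.dist_eq,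
          ← norm_neg (lam - _), neg_sub]
      rw [this]
      exact Metric.isOpen_ball
    · exact dense_Mj α h
end

section
/- Let N ≥ 2, α = (α₁,…,α_N) ∈ ℂ^N, and suppose there exists k ∈ {1,…,N} with Im α_k ≠ 0. Then 𝓜_N(α) is a dense G_δ subset of ℂ if and only if the only pair (r₁,r₂) ∈ ℚ² such that (r₁·(Re α_j · Im α_k − Re α_k · Im α_j) + r₂·Im α_j)/Im α_k ∈ ℚ for every j ∈ {1,…,N}\{k} is (r₁,r₂) = (0,0). -/
open Finset

namespace St11

variable {N : ℕ} (α : Fin N → ℂ)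

/-- size of a tuple -/
noncomputable def sz (p : ℤ × (Fin N → ℤ)) : ℝ := (|p.1| : ℝ) + ∑ j, (|p.2 j| : ℝ)

/-- value of a tuple -/
noncomputable def vl (p : ℤ × (Fin N → ℤ)) : ℂ := (p.1 : ℂ) + ∑ j, α j * (p.2 j : ℂ)

noncomputable def SS : Set ℂ := Set.range (vl α)

noncomputable def EE (n : ℕ) : Set ℂ :=
  {lam | ∃ p : ℤ × (Fin N → ℤ), (n : ℝ) + 1 ≤ sz p ∧
    ‖vl α p - lam‖ < (sz p) ^ (-((n : ℝ) + 1)) / ((n : ℝ) + 1)}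

lemma sz_nonneg (p : ℤ × (Fin N → ℤ)) : 0 ≤ sz p := by
  have : ∀ j ∈ univ, (0:ℝ) ≤ (|p.2 j| : ℝ) := by intro j _; positivity
  have h2 := Finset.sum_nonneg this
  have h1 : (0:ℝ) ≤ (|p.1| : ℝ) := by positivity
  unfold sz; linarith

lemma one_le_sz (p : ℤ × (Fin N → ℤ)) (hp : vl α p ≠ 0) : 1 ≤ sz p := by
  by_contra h
  push_neg at h
  have key : (|p.1| : ℝ) + ∑ j, (|p.2 j| : ℝ) = ((|p.1| + ∑ j, |p.2 j| : ℤ) : ℝ) := by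
    push_cast; ring
  have hz : |p.1| + ∑ j, |p.2 j| = 0 := by
    have hlt : ((|p.1| + ∑ j, |p.2 j| : ℤ) : ℝ) < 1 := by rw [← key]; exact h
    have hge : (0:ℤ) ≤ |p.1| + ∑ j, |p.2 j| := by
      have : (0:ℤ) ≤ ∑ j, |p.2 j| := Finset.sum_nonneg (fun j _ => abs_nonneg _)
      have := abs_nonneg p.1; omega
    have : (|p.1| + ∑ j, |p.2 j| : ℤ) < 1 := by exact_mod_cast hlt
    omega
  have h1 : |p.1| = 0 := by
    have : (0:ℤ) ≤ ∑ j, |p.2 j| := Finset.sum_nonneg (fun j _ => abs_nonneg _)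
    have := abs_nonneg p.1; omega
  have h2 : ∑ j, |p.2 j| = 0 := by have := abs_nonneg p.1; omega
  have h3 : ∀ j ∈ univ, |p.2 j| = 0 :=
    (Finset.sum_eq_zero_iff_of_nonneg (fun j _ => abs_nonneg _)).1 h2
  apply hp
  have hp1 : p.1 = 0 := abs_eq_zero.1 h1
  have hp2 : ∀ j, p.2 j = 0 := fun j => abs_eq_zero.1 (h3 j (mem_univ j))
  simp [vl, hp1, hp2]

lemma not_dioph_iff (lam : ℂ) : ¬ dioph α lam ↔ ∀ n : ℕ, lam ∈ EE α n := by
  constructor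
  · intro hnd n
    rw [dioph] at hnd
    push_neg at hnd
    obtain ⟨τ, ξ, h1, h2⟩ := hnd (1/((n:ℝ)+1)) (by positivity) ((n:ℝ)+1) (by positivity)
      ((n:ℝ)+1) (by positivity)
    refine ⟨(τ, ξ), h1, ?_⟩
    have heq : (1/((n:ℝ)+1)) * ((sz ((τ, ξ) : ℤ × (Fin N → ℤ)))^(-((n:ℝ)+1)))
        = (sz ((τ, ξ) : ℤ × (Fin N → ℤ)))^(-((n:ℝ)+1)) / ((n:ℝ)+1) := by ring
    rw [← heq]
    exact h2
  · intro hE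
    rintro ⟨C, hC, M, hM, R, hR, h⟩
    obtain ⟨n, hn⟩ := exists_nat_ge (max (max M R) (1/C))
    obtain ⟨p, hp1, hp2⟩ := hE n
    have hM1 : M ≤ (n:ℝ)+1 := by
      have := le_trans (le_max_left M R) (le_max_left _ (1/C)); linarith
    have hR1 : R ≤ (n:ℝ)+1 := by
      have := le_trans (le_max_right M R) (le_max_left _ (1/C)); linarith
    have hC1 : 1/C ≤ (n:ℝ)+1 := by
      have := le_max_right (max M R) (1/C); linarith
    have hsz1 : 1 ≤ sz p := by
      have : (0:ℝ) ≤ (n:ℝ) := Nat.cast_nonneg n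
      linarith
    have hx := h p.1 p.2 (by
      show R ≤ (|p.1|:ℝ) + ∑ j, (|p.2 j|:ℝ)
      have : sz p = (|p.1|:ℝ) + ∑ j, (|p.2 j|:ℝ) := rfl
      linarith [hp1])
    have hrw : ‖(p.1 : ℂ) + (∑ j, α j * (p.2 j : ℂ)) - lam‖
        = ‖vl α p - lam‖ := rfl
    have hrw2 : ((|p.1|:ℝ) + ∑ j, (|p.2 j|:ℝ)) = sz p := rfl
    rw [hrw, hrw2] at hx
    have h1 : sz p ^ (-((n:ℝ)+1)) ≤ sz p ^ (-M) :=
      Real.rpow_le_rpow_of_exponent_le hsz1 (by linarith)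
    have h2 : 1/((n:ℝ)+1) ≤ C := by
      rw [div_le_iff₀ (by positivity)]
      rw [div_le_iff₀ hC] at hC1
      linarith
    have h3 : sz p ^ (-((n:ℝ)+1)) / ((n:ℝ)+1) ≤ C * sz p ^ (-M) := by
      have hnn : (0:ℝ) ≤ sz p ^ (-((n:ℝ)+1)) := Real.rpow_nonneg (by linarith) _
      calc sz p ^ (-((n:ℝ)+1)) / ((n:ℝ)+1) = sz p ^ (-((n:ℝ)+1)) * (1/((n:ℝ)+1)) := by ring
        _ ≤ sz p ^ (-M) * C := by
            apply mul_le_mul h1 h2 (by positivity) (Real.rpow_nonneg (by linarith) _)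
        _ = C * sz p ^ (-M) := by ring
    linarith

lemma isOpen_EE (n : ℕ) : IsOpen (EE α n) := by
  have hset : EE α n = ⋃ p : ℤ × (Fin N → ℤ), ⋃ (_ : (n:ℝ)+1 ≤ sz p),
      Metric.ball (vl α p) ((sz p) ^ (-((n : ℝ) + 1)) / ((n : ℝ) + 1)) := by
    ext lam
    simp only [EE, Set.mem_setOf_eq, Set.mem_iUnion, Metric.mem_ball, exists_prop]
    refine exists_congr fun p => and_congr_right fun _ => ?_
    rw [Complex.dist_eq, norm_sub_rev]
  rw [hset]
  exact isOpen_iUnion fun p => isOpen_iUnion fun _ => Metric.isOpen_ball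

lemma seteq_not_dioph : {lam : ℂ | ¬ dioph α lam} = ⋂ n, EE α n := by
  ext lam
  simp only [Set.mem_setOf_eq, Set.mem_iInter]
  exact not_dioph_iff α lam

lemma isGδ_not_dioph : IsGδ {lam : ℂ | ¬ dioph α lam} := by
  rw [seteq_not_dioph]
  exact IsGδ.iInter fun n => (isOpen_EE α n).isGδ

lemma not_dioph_subset_closure : {lam : ℂ | ¬ dioph α lam} ⊆ closure (SS α) := by
  intro lam h
  rw [Set.mem_setOf_eq, not_dioph_iff] at h
  rw [Metric.mem_closure_iff]
  intro ε hε
  obtain ⟨n, hn⟩ := exists_nat_ge (1/ε)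
  obtain ⟨p, hp1, hp2⟩ := h n
  refine ⟨vl α p, ⟨p, rfl⟩, ?_⟩
  have hsz1 : 1 ≤ sz p := by
    have : (0:ℝ) ≤ (n:ℝ) := Nat.cast_nonneg n
    linarith
  have h1 : sz p ^ (-((n:ℝ)+1)) ≤ 1 :=
    Real.rpow_le_one_of_one_le_of_nonpos hsz1 (neg_nonpos.2 (by positivity))
  have h2 : (1:ℝ)/((n:ℝ)+1) < ε := by
    rw [div_lt_iff₀ (by positivity)]
    rw [div_le_iff₀ hε] at hn
    nlinarith
  have h3 : dist lam (vl α p) = ‖vl α p - lam‖ := by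
    rw [Complex.dist_eq, norm_sub_rev]
  rw [h3]
  calc ‖vl α p - lam‖ < sz p ^ (-((n:ℝ)+1)) / ((n:ℝ)+1) := hp2
    _ ≤ 1 / ((n:ℝ)+1) := by gcongr
    _ < ε := h2

lemma vl_comb (p q : ℤ × (Fin N → ℤ)) (m : ℤ) :
    vl α (p.1 + m * q.1, fun j => p.2 j + m * q.2 j) = vl α p + (m : ℂ) * vl α q := by
  unfold vl
  have hs : ∑ j, α j * (((p.2 j + m * q.2 j : ℤ)) : ℂ)
      = ∑ j, (α j * (p.2 j : ℂ) + (m:ℂ) * (α j * (q.2 j : ℂ))) := by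
    refine Finset.sum_congr rfl fun j _ => ?_
    push_cast; ring
  show ((p.1 + m * q.1 : ℤ) : ℂ) + ∑ j, α j * (((p.2 j + m * q.2 j : ℤ)) : ℂ) = _
  rw [hs, Finset.sum_add_distrib, ← Finset.mul_sum]
  push_cast; ring

noncomputable def szZ (p : ℤ × (Fin N → ℤ)) : ℤ := |p.1| + ∑ j, |p.2 j|

lemma sz_eq (p : ℤ × (Fin N → ℤ)) : sz p = ((szZ p : ℤ) : ℝ) := by
  unfold sz szZ; push_cast; ring

lemma sz_comb (p q : ℤ × (Fin N → ℤ)) (m : ℕ) :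
    (m:ℝ) * sz q - sz p ≤ sz (p.1 + (m:ℤ) * q.1, fun j => p.2 j + (m:ℤ) * q.2 j) := by
  have key : ∀ a b : ℤ, (m:ℤ) * |b| - |a| ≤ |a + (m:ℤ)*b| := by
    intro a b
    have h1 : |(m:ℤ)*b| - |(-a)| ≤ |(m:ℤ)*b - (-a)| := abs_sub_abs_le_abs_sub _ _
    have h2 : |(m:ℤ)*b| = (m:ℤ) * |b| := by
      rw [abs_mul, abs_of_nonneg (by positivity : (0:ℤ) ≤ (m:ℤ))]
    have h3 : (m:ℤ)*b - (-a) = a + (m:ℤ)*b := by ring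
    rw [h2, h3, abs_neg] at h1
    exact h1
  have hZ : (m:ℤ) * szZ q - szZ p ≤ szZ (p.1 + (m:ℤ) * q.1, fun j => p.2 j + (m:ℤ) * q.2 j) := by
    have hsum : ∑ j, ((m:ℤ) * |q.2 j| - |p.2 j|) ≤ ∑ j, |p.2 j + (m:ℤ) * q.2 j| :=
      Finset.sum_le_sum fun j _ => key _ _
    rw [Finset.sum_sub_distrib, ← Finset.mul_sum] at hsum
    have h1 := key p.1 q.1
    show (m:ℤ) * szZ q - szZ p ≤ |p.1 + (m:ℤ)*q.1| + ∑ j, |p.2 j + (m:ℤ)*q.2 j|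
    unfold szZ
    push_cast
    linarith
  rw [sz_eq, sz_eq, sz_eq]
  exact_mod_cast hZ

lemma dense_EE (hS : Dense (SS α)) (n : ℕ) : Dense (EE α n) := by
  rw [Metric.dense_iff]
  intro x r hr
  obtain ⟨z0, hz0b, p0, hp0⟩ := Metric.dense_iff.1 hS x (r/2) (by positivity)
  obtain ⟨m, hm⟩ := exists_nat_ge ((n:ℝ) + 1 + sz p0)
  set δ := r / (2 * ((m:ℝ)+1)) with hδ
  have hδpos : 0 < δ := by positivity
  obtain ⟨z1, hz1b, p1, hp1⟩ := Metric.dense_iff.1 hS (((δ/2 : ℝ)) : ℂ) (δ/4) (by positivity)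
  rw [Metric.mem_ball, Complex.dist_eq] at hz1b
  have habs2 : ‖(((δ/2 : ℝ)) : ℂ)‖ = δ/2 := by
    rw [Complex.norm_real, Real.norm_eq_abs, abs_of_pos (by positivity)]
  have hz1abs : ‖z1‖ < δ := by
    calc ‖z1‖ = ‖(z1 - ((δ/2:ℝ):ℂ)) + ((δ/2:ℝ):ℂ)‖ := by ring_nf
      _ ≤ ‖z1 - ((δ/2:ℝ):ℂ)‖ + ‖(((δ/2:ℝ)):ℂ)‖ := norm_add_le _ _
      _ < δ/4 + δ/2 := by rw [habs2] at *; linarith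
      _ < δ := by linarith
  have hz1ne : z1 ≠ 0 := by
    intro h0
    rw [h0, zero_sub, norm_neg, habs2] at hz1b
    linarith
  set q : ℤ × (Fin N → ℤ) := (p0.1 + (m:ℤ) * p1.1, fun j => p0.2 j + (m:ℤ) * p1.2 j) with hq
  have hvq : vl α q = vl α p0 + (m:ℂ) * vl α p1 := vl_comb α p0 p1 (m:ℤ)
  have hszq : (m:ℝ) * sz p1 - sz p0 ≤ sz q := sz_comb p0 p1 m
  have h1le : 1 ≤ sz p1 := one_le_sz α p1 (by rw [hp1]; exact hz1ne)
  have hszq2 : (n:ℝ) + 1 ≤ sz q := by nlinarith [sz_nonneg (N:=N) p0, sz_nonneg (N:=N) p1, (Nat.cast_nonneg m : (0:ℝ) ≤ (m:ℝ))]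
  refine ⟨vl α q, ?_, ⟨q, hszq2, ?_⟩⟩
  · rw [Metric.mem_ball, Complex.dist_eq]
    rw [Metric.mem_ball, Complex.dist_eq] at hz0b
    have : vl α q - x = (z0 - x) + (m:ℂ) * z1 := by rw [hvq, hp0, hp1]; ring
    calc ‖vl α q - x‖ = ‖(z0 - x) + (m:ℂ) * z1‖ := by rw [this]
      _ ≤ ‖z0 - x‖ + ‖(m:ℂ) * z1‖ := norm_add_le _ _
      _ = ‖z0 - x‖ + (m:ℝ) * ‖z1‖ := by
          rw [norm_mul, Complex.norm_natCast]
      _ < r/2 + (m:ℝ) * δ := by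
          have hmn : (0:ℝ) ≤ (m:ℝ) := Nat.cast_nonneg m
          have hb : (m:ℝ) * ‖z1‖ ≤ (m:ℝ) * δ :=
            mul_le_mul_of_nonneg_left (le_of_lt hz1abs) hmn
          linarith
      _ ≤ r := by
          have hmd : (m:ℝ) * δ ≤ r/2 := by
            rw [hδ, ← mul_div_assoc, div_le_div_iff₀ (by positivity : (0:ℝ) < 2*((m:ℝ)+1))
              (by norm_num : (0:ℝ) < 2)]
            nlinarith [(Nat.cast_nonneg m : (0:ℝ) ≤ (m:ℝ)), hr.le]
          linarith
  · rw [sub_self, norm_zero]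
    have : (0:ℝ) < sz q := by linarith [hszq2, (Nat.cast_nonneg n : (0:ℝ) ≤ (n:ℝ))]
    positivity

lemma dense_not_dioph_iff : Dense {lam : ℂ | ¬ dioph α lam} ↔ Dense (SS α) := by
  constructor
  · intro hd
    have hsub := closure_mono (not_dioph_subset_closure α)
    rw [closure_closure] at hsub
    exact fun x => hsub (hd x)
  · intro hS
    rw [seteq_not_dioph]
    exact dense_iInter_of_isOpen (isOpen_EE α) (dense_EE α hS)

lemma vl_add (p q : ℤ × (Fin N → ℤ)) :
    vl α (p.1 + q.1, fun j => p.2 j + q.2 j) = vl α p + vl α q := by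
  have := vl_comb α p q 1
  simpa using this

lemma vl_neg (p : ℤ × (Fin N → ℤ)) :
    vl α (-p.1, fun j => -(p.2 j)) = - vl α p := by
  unfold vl
  push_cast
  have : ∀ j ∈ univ, α j * (-(p.2 j : ℂ)) = -(α j * (p.2 j : ℂ)) := by intros; ring
  rw [Finset.sum_congr rfl this, Finset.sum_neg_distrib]
  ring

/-- the subgroup of `ℂ` whose carrier is `SS α` -/
noncomputable def Gam : AddSubgroup ℂ where
  carrier := SS α
  zero_mem' := ⟨(0, 0), by simp [vl]⟩
  add_mem' := by
    rintro a b ⟨p, rfl⟩ ⟨q, rfl⟩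
    exact ⟨(p.1 + q.1, fun j => p.2 j + q.2 j), vl_add α p q⟩
  neg_mem' := by
    rintro a ⟨p, rfl⟩
    exact ⟨(-p.1, fun j => -(p.2 j)), vl_neg α p⟩

lemma Gam_coe : ((Gam α : AddSubgroup ℂ) : Set ℂ) = SS α := rfl

lemma one_mem_Gam : (1 : ℂ) ∈ Gam α := ⟨(1, 0), by simp [vl]⟩

lemma alpha_mem_Gam (i : Fin N) : α i ∈ Gam α := by
  refine ⟨(0, Pi.single i 1), ?_⟩
  unfold vl
  have : ∀ j, α j * ((Pi.single i 1 : Fin N → ℤ) j : ℂ) = if j = i then α i else 0 := by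
    intro j
    rcases eq_or_ne j i with h | h
    · subst h; simp
    · simp [Pi.single_apply, h]
  rw [Finset.sum_congr rfl (fun j _ => this j)]
  simp

/-- closure of the subgroup -/
noncomputable def HH : AddSubgroup ℂ := (Gam α).topologicalClosure

lemma HH_coe : ((HH α : AddSubgroup ℂ) : Set ℂ) = closure (SS α) :=
  AddSubgroup.topologicalClosure_coe

lemma SS_subset_HH : SS α ⊆ (HH α : Set ℂ) := by
  rw [HH_coe]; exact subset_closure

lemma isClosed_HH : IsClosed ((HH α : AddSubgroup ℂ) : Set ℂ) :=
  AddSubgroup.isClosed_topologicalClosure _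

/-- subgroup of `ℝ` generated by the imaginary parts -/
noncomputable def BB : AddSubgroup ℝ := AddSubgroup.closure (Set.range fun j => (α j).im)

lemma BB_im_surj : ∀ y ∈ BB α, ∃ z ∈ SS α, z.im = y := by
  have hle : BB α ≤ AddSubgroup.map Complex.imAddGroupHom (Gam α) := by
    rw [BB, AddSubgroup.closure_le]
    rintro y ⟨j, rfl⟩
    exact ⟨α j, alpha_mem_Gam α j, rfl⟩
  intro y hy
  obtain ⟨z, hz, hzy⟩ := AddSubgroup.mem_map.1 (hle hy)
  exact ⟨z, hz, hzy⟩

lemma exists_small (hBd : Dense ((BB α : AddSubgroup ℝ) : Set ℝ)) :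
    ∀ ε > (0:ℝ), ∃ z ∈ HH α, z ≠ 0 ∧ ‖z‖ < ε := by
  -- construct a sequence of elements of `Gam α` in a compact set with distinct im parts
  have hy : ∀ n : ℕ, ∃ y ∈ BB α, y ∈ Set.Ioo (1/((n:ℝ)+2)) (1/((n:ℝ)+1)) := by
    intro n
    apply hBd.exists_between
    have h1 : (0:ℝ) < (n:ℝ)+1 := by positivity
    have h2 : (0:ℝ) < (n:ℝ)+2 := by positivity
    rw [div_lt_div_iff₀ h2 h1]
    linarith
  choose y hyB hyI using hy
  have hydec : ∀ a b : ℕ, a < b → y b < y a := by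
    intro a b hab
    have h1 := (hyI b).2
    have h2 := (hyI a).1
    have : (1:ℝ)/((b:ℝ)+1) ≤ 1/((a:ℝ)+2) := by
      apply div_le_div_of_nonneg_left (by norm_num) (by positivity)
      have : (a:ℝ) + 1 ≤ (b:ℝ) := by exact_mod_cast Nat.succ_le_of_lt hab
      linarith
    linarith
  have hz : ∀ n : ℕ, ∃ z ∈ SS α, z.im = y n := fun n => BB_im_surj α (y n) (hyB n)
  choose z hzS hzim using hz
  set w : ℕ → ℂ := fun n => z n - (⌊(z n).re⌋ : ℤ) • (1:ℂ) with hw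
  have hwG : ∀ n, w n ∈ Gam α := by
    intro n
    exact AddSubgroup.sub_mem _ (hzS n) (AddSubgroup.zsmul_mem _ (one_mem_Gam α) _)
  have hwre : ∀ n, (w n).re = Int.fract (z n).re := by
    intro n
    show (z n - (⌊(z n).re⌋ : ℤ) • (1:ℂ)).re = _
    rw [zsmul_eq_mul, mul_one, Complex.sub_re, Complex.intCast_re, Int.fract]
  have hwim : ∀ n, (w n).im = y n := by
    intro n
    show (z n - (⌊(z n).re⌋ : ℤ) • (1:ℂ)).im = _
    rw [zsmul_eq_mul, mul_one, Complex.sub_im, Complex.intCast_im, sub_zero, hzim n]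
  have hwball : ∀ n, w n ∈ Metric.closedBall (0:ℂ) 2 := by
    intro n
    rw [Metric.mem_closedBall, dist_zero_right]
    have h1 := Complex.norm_le_abs_re_add_abs_im (w n)
    have h2 : |(w n).re| ≤ 1 := by
      rw [hwre n, abs_of_nonneg (Int.fract_nonneg _)]
      exact le_of_lt (Int.fract_lt_one _)
    have h3 : |(w n).im| ≤ 1 := by
      rw [hwim n, abs_of_nonneg (le_of_lt (lt_trans (by positivity) (hyI n).1))]
      have := (hyI n).2
      have : y n < 1 := lt_of_lt_of_le this (by
        apply div_le_one_of_le₀ <;> [skip; positivity]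
        have : (0:ℝ) ≤ (n:ℝ) := Nat.cast_nonneg n
        linarith)
      linarith
    linarith
  intro ε hε
  obtain ⟨a, _, ψ, hψ, hconv⟩ :=
    (isCompact_closedBall (0:ℂ) 2).tendsto_subseq hwball
  rw [Metric.tendsto_atTop] at hconv
  obtain ⟨NN, hNN⟩ := hconv (ε/2) (by positivity)
  refine ⟨w (ψ NN) - w (ψ (NN+1)), ?_, ?_, ?_⟩
  · exact (AddSubgroup.le_topologicalClosure _)
      (AddSubgroup.sub_mem _ (hwG _) (hwG _))
  · intro h0
    have him : (w (ψ NN) - w (ψ (NN+1))).im = 0 := by rw [h0]; rfl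
    rw [Complex.sub_im, hwim, hwim] at him
    have hlt : ψ NN < ψ (NN+1) := hψ (Nat.lt_succ_self NN)
    have := hydec _ _ hlt
    linarith
  · have h1 := hNN NN (le_refl NN)
    have h2 := hNN (NN+1) (Nat.le_succ NN)
    have : dist (w (ψ NN)) (w (ψ (NN+1))) < ε :=
      lt_of_le_of_lt (dist_triangle_right _ _ a) (by
        simp only [Function.comp] at h1 h2
        linarith)
    rwa [Complex.dist_eq] at this

lemma dense_of_indep
    (hind : ∀ ε > (0:ℝ), ∃ z₁ ∈ HH α, ∃ z₂ ∈ HH α, ‖z₁‖ < ε ∧ ‖z₂‖ < ε ∧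
      z₁.re * z₂.im - z₁.im * z₂.re ≠ 0) :
    Dense (SS α) := by
  rw [Metric.dense_iff]
  intro x r hr
  obtain ⟨u, hu, v, hv, huab, hvab, hd⟩ := hind (r/4) (by positivity)
  set d := u.re * v.im - u.im * v.re with hdd
  set s := (x.re * v.im - v.re * x.im) / d with hs
  set t := (u.re * x.im - x.re * u.im) / d with ht
  have hx : x = (s : ℂ) * u + (t : ℂ) * v := by
    apply Complex.ext
    · simp only [Complex.add_re, Complex.mul_re, Complex.ofReal_re, Complex.ofReal_im]
      rw [hs, ht]
      field_simp
      ring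
    · simp only [Complex.add_im, Complex.mul_im, Complex.ofReal_re, Complex.ofReal_im]
      rw [hs, ht]
      field_simp
      ring
  set p := (⌊s⌋ : ℤ) • u + (⌊t⌋ : ℤ) • v with hp
  have hpH : p ∈ HH α := by
    exact AddSubgroup.add_mem _ (AddSubgroup.zsmul_mem _ hu _) (AddSubgroup.zsmul_mem _ hv _)
  have hdist : ‖p - x‖ < r/2 := by
    have hpx : p - x = ((⌊s⌋ - s : ℝ) : ℂ) * u + ((⌊t⌋ - t : ℝ) : ℂ) * v := by
      rw [hp, hx, zsmul_eq_mul, zsmul_eq_mul]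
      push_cast
      ring
    rw [hpx]
    have h1 : |(⌊s⌋ : ℝ) - s| ≤ 1 := by
      have h1 := Int.fract_nonneg s
      have h2 := Int.fract_lt_one s
      rw [Int.fract] at h1 h2
      rw [abs_le]; constructor <;> linarith
    have h2 : |(⌊t⌋ : ℝ) - t| ≤ 1 := by
      have h1 := Int.fract_nonneg t
      have h2 := Int.fract_lt_one t
      rw [Int.fract] at h1 h2
      rw [abs_le]; constructor <;> linarith
    calc ‖((⌊s⌋ - s : ℝ) : ℂ) * u + ((⌊t⌋ - t : ℝ) : ℂ) * v‖
        ≤ ‖((⌊s⌋ - s : ℝ) : ℂ) * u‖ + ‖((⌊t⌋ - t : ℝ) : ℂ) * v‖ :=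
          norm_add_le _ _
      _ = |(⌊s⌋ : ℝ) - s| * ‖u‖ + |(⌊t⌋ : ℝ) - t| * ‖v‖ := by
          rw [norm_mul, norm_mul, Complex.norm_real, Real.norm_eq_abs, Complex.norm_real, Real.norm_eq_abs]
      _ ≤ 1 * ‖u‖ + 1 * ‖v‖ := by
          have hu0 := norm_nonneg u
          have hv0 := norm_nonneg v
          apply add_le_add <;> apply mul_le_mul_of_nonneg_right <;> first | assumption | skip
      _ < r/2 := by rw [one_mul, one_mul]; linarith
  have hpc : p ∈ closure (SS α) := by rw [← HH_coe]; exact hpH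
  rw [Metric.mem_closure_iff] at hpc
  obtain ⟨z, hzS, hzp⟩ := hpc (r/2) (by positivity)
  refine ⟨z, ?_, hzS⟩
  rw [Metric.mem_ball]
  calc dist z x ≤ dist z p + dist p x := dist_triangle _ _ _
    _ < r/2 + r/2 := by
        rw [Complex.dist_eq, norm_sub_rev] at hzp
        rw [Complex.dist_eq, Complex.dist_eq]
        exact add_lt_add hzp hdist
    _ = r := by ring

lemma dense_of_realaxis (hBd : Dense ((BB α : AddSubgroup ℝ) : Set ℝ))
    (hax : ∀ x : ℝ, (x : ℂ) ∈ HH α) : Dense (SS α) := by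
  rw [Metric.dense_iff]
  intro x r hr
  obtain ⟨b, hbB, hbI⟩ := hBd.exists_between (show x.im - r/2 < x.im + r/2 by linarith)
  obtain ⟨z, hzS, hzim⟩ := BB_im_surj α b hbB
  set w := z + ((x.re - z.re : ℝ) : ℂ) with hwdef
  have hwH : w ∈ HH α := AddSubgroup.add_mem _ (SS_subset_HH α hzS) (hax _)
  have hwre : w.re = x.re := by rw [hwdef]; simp
  have hwim : w.im = b := by rw [hwdef]; simp [hzim]
  have hdist : ‖w - x‖ < r/2 := by
    have : w - x = ((0 : ℝ) : ℂ) + Complex.I * ((b - x.im : ℝ) : ℂ) := by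
      apply Complex.ext <;> simp [hwre, hwim]
    rw [this]
    simp only [Complex.ofReal_zero, zero_add, norm_mul, Complex.norm_I, one_mul,
      Complex.norm_real, Real.norm_eq_abs]
    rw [abs_lt]
    constructor <;> [linarith [hbI.1]; linarith [hbI.2]]
  have hwc : w ∈ closure (SS α) := by rw [← HH_coe]; exact hwH
  rw [Metric.mem_closure_iff] at hwc
  obtain ⟨z', hz'S, hz'w⟩ := hwc (r/2) (by positivity)
  refine ⟨z', ?_, hz'S⟩
  rw [Metric.mem_ball]
  calc dist z' x ≤ dist z' w + dist w x := dist_triangle _ _ _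
    _ < r/2 + r/2 := by
        rw [Complex.dist_eq, norm_sub_rev] at hz'w
        rw [Complex.dist_eq, Complex.dist_eq]
        exact add_lt_add hz'w hdist
    _ = r := by ring

lemma line_mem (hBd : Dense ((BB α : AddSubgroup ℝ) : Set ℝ)) {ε₀ : ℝ} (hε₀ : 0 < ε₀)
    (hdep : ∀ z₁ ∈ HH α, ∀ z₂ ∈ HH α, ‖z₁‖ < ε₀ → ‖z₂‖ < ε₀ →
      z₁.re * z₂.im - z₁.im * z₂.re = 0)
    {h₀ : ℂ} (hh₀H : h₀ ∈ HH α) (hh₀ne : h₀ ≠ 0) (hh₀ab : ‖h₀‖ < ε₀) :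
    ∀ t : ℝ, (t : ℂ) * h₀ ∈ HH α := by
  intro t
  show (t : ℂ) * h₀ ∈ (HH α : Set ℂ)
  rw [← (isClosed_HH α).closure_eq, Metric.mem_closure_iff]
  intro δ hδ
  obtain ⟨g, hgH, hgne, hgab⟩ := exists_small α hBd (min ε₀ δ) (by positivity)
  have hgε := lt_of_lt_of_le hgab (min_le_left _ _)
  have hgδ := lt_of_lt_of_le hgab (min_le_right _ _)
  have hd := hdep h₀ hh₀H g hgH hh₀ab hgε
  have hnz : h₀.re^2 + h₀.im^2 ≠ 0 := by
    intro h
    apply hh₀ne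
    have h1 : h₀.re = 0 := by nlinarith [sq_nonneg h₀.re, sq_nonneg h₀.im]
    have h2 : h₀.im = 0 := by nlinarith [sq_nonneg h₀.re, sq_nonneg h₀.im]
    exact Complex.ext (by simpa using h1) (by simpa using h2)
  set sval := (g.re * h₀.re + g.im * h₀.im)/(h₀.re^2 + h₀.im^2) with hsval
  have hgs : g = (sval : ℂ) * h₀ := by
    apply Complex.ext
    · simp only [Complex.mul_re, Complex.ofReal_re, Complex.ofReal_im, zero_mul, sub_zero,
        hsval]
      field_simp
      first
        | linear_combination h₀.im * hd
        | linear_combination (-h₀.im) * hd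
    · simp only [Complex.mul_im, Complex.ofReal_re, Complex.ofReal_im, zero_mul, add_zero,
        hsval]
      field_simp
      first
        | linear_combination h₀.re * hd
        | linear_combination (-h₀.re) * hd
  have hsne : sval ≠ 0 := by
    intro h
    rw [h] at hgs
    simp only [Complex.ofReal_zero, zero_mul] at hgs
    exact hgne hgs
  set m := round (t / sval) with hm
  refine ⟨(m : ℤ) • g, AddSubgroup.zsmul_mem _ hgH m, ?_⟩
  have heq : (t : ℂ) * h₀ - (m : ℤ) • g = ((t - (m : ℝ) * sval : ℝ) : ℂ) * h₀ := by
    rw [zsmul_eq_mul, hgs]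
    push_cast
    ring
  rw [Complex.dist_eq, heq, norm_mul, Complex.norm_real, Real.norm_eq_abs]
  have hround : |t - (m : ℝ) * sval| ≤ |sval| / 2 := by
    have h1 : |t/sval - (m : ℝ)| ≤ 1/2 := by rw [hm]; exact abs_sub_round _
    have h2 : t - (m:ℝ)*sval = (t/sval - m) * sval := by
      rw [sub_mul, div_mul_cancel₀ _ hsne]
    rw [h2, abs_mul]
    calc |t/sval - (m:ℝ)| * |sval| ≤ (1/2) * |sval| :=
          mul_le_mul_of_nonneg_right h1 (abs_nonneg _)
      _ = |sval|/2 := by ring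
  have habsg : |sval| * ‖h₀‖ = ‖g‖ := by
    rw [hgs, norm_mul, Complex.norm_real, Real.norm_eq_abs]
  calc |t - (m:ℝ)*sval| * ‖h₀‖ ≤ (|sval|/2) * ‖h₀‖ :=
        mul_le_mul_of_nonneg_right hround (norm_nonneg _)
    _ = (|sval| * ‖h₀‖) / 2 := by ring
    _ = ‖g‖ / 2 := by rw [habsg]
    _ < δ := by linarith

lemma exists_int_ann (hBd : Dense ((BB α : AddSubgroup ℝ) : Set ℝ)) (hnd : ¬ Dense (SS α)) :
    ∃ φ₁ φ₂ : ℝ, ¬(φ₁ = 0 ∧ φ₂ = 0) ∧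
      ∀ z ∈ SS α, ∃ m : ℤ, φ₁ * z.re + φ₂ * z.im = (m : ℝ) := by
  have hP : ∃ ε₀ > (0:ℝ), ∀ z₁ ∈ HH α, ∀ z₂ ∈ HH α,
      ‖z₁‖ < ε₀ → ‖z₂‖ < ε₀ → z₁.re * z₂.im - z₁.im * z₂.re = 0 := by
    by_contra h
    push_neg at h
    exact hnd (dense_of_indep α h)
  obtain ⟨ε₀, hε₀, hdep⟩ := hP
  obtain ⟨h₀, hh₀H, hh₀ne, hh₀ab⟩ := exists_small α hBd ε₀ hε₀
  have hline := line_mem α hBd hε₀ hdep hh₀H hh₀ne hh₀ab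
  by_cases him : h₀.im = 0
  · exfalso
    apply hnd
    apply dense_of_realaxis α hBd
    intro x
    have hre : h₀.re ≠ 0 := by
      intro h
      exact hh₀ne (Complex.ext (by simpa using h) (by simpa using him))
    have heq : ((x / h₀.re : ℝ) : ℂ) * h₀ = (x : ℂ) := by
      apply Complex.ext
      · simp only [Complex.mul_re, Complex.ofReal_re, Complex.ofReal_im, zero_mul, sub_zero]
        field_simp
      · simp only [Complex.mul_im, Complex.ofReal_re, Complex.ofReal_im, zero_mul, add_zero]
        rw [him, mul_zero]
    rw [← heq]
    exact hline _
  · set H0 : AddSubgroup ℝ := AddSubgroup.comap Complex.ofRealHom.toAddMonoidHom (HH α)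
      with hH0
    have hH0closed : IsClosed ((H0 : AddSubgroup ℝ) : Set ℝ) := by
      have heq : ((H0 : AddSubgroup ℝ) : Set ℝ)
          = (fun x : ℝ => (x : ℂ)) ⁻¹' ((HH α : AddSubgroup ℂ) : Set ℂ) := rfl
      rw [heq]
      exact (isClosed_HH α).preimage Complex.continuous_ofReal
    have h1H0 : (1:ℝ) ∈ H0 := by
      show ((1:ℝ) : ℂ) ∈ HH α
      rw [Complex.ofReal_one]
      exact (AddSubgroup.le_topologicalClosure _) (one_mem_Gam α)
    rcases AddSubgroup.dense_or_cyclic H0 with hdense | ⟨c, hc⟩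
    · exfalso
      apply hnd
      apply dense_of_realaxis α hBd
      intro x
      have huniv : ((H0 : AddSubgroup ℝ) : Set ℝ) = Set.univ := by
        rw [← hH0closed.closure_eq]
        exact hdense.closure_eq
      have hx : x ∈ H0 := by
        have := Set.eq_univ_iff_forall.1 huniv x
        exact this
      exact hx
    · have hmem : ∀ x : ℝ, x ∈ H0 ↔ ∃ mm : ℤ, mm • c = x := by
        intro x
        rw [hc]
        exact AddSubgroup.mem_closure_singleton
      obtain ⟨m₁, hm₁⟩ := (hmem 1).1 h1H0
      have hcne : c ≠ 0 := by
        intro h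
        rw [h] at hm₁
        simp at hm₁
      refine ⟨1/c, -h₀.re/(h₀.im * c), ?_, ?_⟩
      · rintro ⟨h1, -⟩
        exact (one_div_ne_zero hcne) h1
      · intro z hzS
        have hzH : z ∈ HH α := SS_subset_HH α hzS
        set xx := z.re - (h₀.re/h₀.im) * z.im with hxx
        have hxxH : (xx : ℂ) ∈ HH α := by
          have heq : (xx : ℂ) = z - ((z.im/h₀.im : ℝ) : ℂ) * h₀ := by
            apply Complex.ext
            · simp only [Complex.ofReal_re, Complex.sub_re, Complex.mul_re, Complex.ofReal_im,
                zero_mul, sub_zero, hxx]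
              field_simp
            · simp only [Complex.ofReal_im, Complex.sub_im, Complex.mul_im, Complex.ofReal_re,
                zero_mul, add_zero]
              field_simp
              ring
          rw [heq]
          exact AddSubgroup.sub_mem _ hzH (hline _)
        obtain ⟨mm, hmm⟩ := (hmem xx).1 hxxH
        refine ⟨mm, ?_⟩
        rw [zsmul_eq_mul, hxx] at hmm
        have hmm2 : (mm:ℝ) * c * h₀.im = z.re * h₀.im - h₀.re * z.im := by
          field_simp at hmm
          linarith [hmm]
        have hstep : (1/c) * z.re + (-h₀.re/(h₀.im*c)) * z.im
            = (z.re*h₀.im - h₀.re*z.im)/(h₀.im*c) := by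
          field_simp
          ring
        rw [hstep, ← hmm2]
        field_simp

lemma rat_witness_of_ann {k : Fin N} (hk : (α k).im ≠ 0)
    (h : ∃ φ₁ φ₂ : ℝ, ¬(φ₁ = 0 ∧ φ₂ = 0) ∧
      ∀ z ∈ SS α, ∃ m : ℤ, φ₁ * z.re + φ₂ * z.im = (m : ℝ)) :
    ∃ r₁ r₂ : ℚ, ¬(r₁ = 0 ∧ r₂ = 0) ∧ ∀ j, j ≠ k → ∃ s : ℚ,
      ((r₁ : ℝ) * ((α j).re * (α k).im - (α k).re * (α j).im)
        + (r₂ : ℝ) * (α j).im) / (α k).im = (s : ℝ) := by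
  obtain ⟨φ₁, φ₂, hne, hann⟩ := h
  obtain ⟨n₀, hn₀⟩ := hann 1 ⟨(1, 0), by simp [vl]⟩
  simp only [Complex.one_re, Complex.one_im, mul_one, mul_zero, add_zero] at hn₀
  choose mj hmj using fun j => hann (α j) (alpha_mem_Gam α j)
  refine ⟨(n₀ : ℚ), ((mj k : ℤ) : ℚ), ?_, ?_⟩
  · rintro ⟨h1, h2⟩
    have hn0 : n₀ = 0 := by exact_mod_cast h1
    have hmk : mj k = 0 := by exact_mod_cast h2
    apply hne
    have hφ1 : φ₁ = 0 := by rw [hn₀, hn0]; simp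
    refine ⟨hφ1, ?_⟩
    have hh := hmj k
    rw [hφ1, hmk] at hh
    simp only [zero_mul, zero_add, Int.cast_zero] at hh
    rcases mul_eq_zero.1 hh with h | h
    · exact h
    · exact absurd h hk
  · intro j hj
    refine ⟨(mj j : ℚ), ?_⟩
    push_cast
    rw [← hmj j, ← hmj k, ← hn₀]
    field_simp
    ring

lemma rat_den_mul_int (q : ℚ) (D : ℕ) (hD : q.den ∣ D) :
    ∃ z : ℤ, (q : ℝ) * (D : ℝ) = (z : ℝ) := by
  obtain ⟨e, he⟩ := hD
  refine ⟨q.num * e, ?_⟩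
  have hq : (q : ℝ) = (q.num : ℝ) / (q.den : ℝ) := Rat.cast_def q
  have hden : (q.den : ℝ) ≠ 0 := Nat.cast_ne_zero.2 q.den_nz
  rw [hq, he]
  push_cast
  field_simp

lemma forward_dir {k : Fin N} (hk : (α k).im ≠ 0) (hd : Dense (SS α)) :
    ∀ r₁ r₂ : ℚ,
      (∀ j, j ≠ k → ∃ s : ℚ,
        ((r₁ : ℝ) * ((α j).re * (α k).im - (α k).re * (α j).im)
          + (r₂ : ℝ) * (α j).im) / (α k).im = (s : ℝ)) →
      r₁ = 0 ∧ r₂ = 0 := by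
  intro r₁ r₂ hs
  by_contra hcon
  have hsel : ∀ j : Fin N, ∃ s : ℚ,
      (if j = k then (r₂ : ℝ)
        else ((r₁ : ℝ) * ((α j).re * (α k).im - (α k).re * (α j).im)
          + (r₂ : ℝ) * (α j).im) / (α k).im) = (s : ℝ) := by
    intro j
    by_cases hj : j = k
    · exact ⟨r₂, by simp [hj]⟩
    · obtain ⟨sv, hsv⟩ := hs j hj
      exact ⟨sv, by simp [hj, hsv]⟩
  choose sQ hsQ using hsel
  set φ₁ : ℝ := (r₁ : ℝ) with hφ₁
  set φ₂ : ℝ := ((r₂ : ℝ) - (r₁ : ℝ) * (α k).re) / (α k).im with hφ₂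
  have hkey : ∀ j, φ₁ * (α j).re + φ₂ * (α j).im = ((sQ j : ℚ) : ℝ) := by
    intro j
    rw [← hsQ j]
    by_cases hj : j = k
    · subst hj
      simp only [if_pos rfl, hφ₁, hφ₂]
      field_simp
      rw [if_pos trivial]; ring
    · simp only [if_neg hj, hφ₁, hφ₂]
      field_simp
      ring
  set D : ℕ := r₁.den * ∏ j, (sQ j).den with hDdef
  have hDpos : 0 < D := Nat.mul_pos r₁.pos (Finset.prod_pos fun j _ => (sQ j).pos)
  obtain ⟨z₀, hz₀⟩ := rat_den_mul_int r₁ D (Dvd.intro _ rfl)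
  have hzj' : ∀ j, ∃ z : ℤ, ((sQ j : ℚ) : ℝ) * (D:ℝ) = (z:ℝ) := fun j =>
    rat_den_mul_int _ D (dvd_mul_of_dvd_right (Finset.dvd_prod_of_mem _ (mem_univ j)) _)
  choose zj hzj using hzj'
  set F : ℂ → ℝ := fun z => ((D : ℝ) * φ₁) * z.re + ((D : ℝ) * φ₂) * z.im with hF
  have hFcont : Continuous F :=
    ((continuous_const.mul Complex.continuous_re).add
      (continuous_const.mul Complex.continuous_im))
  have hFS : ∀ z ∈ SS α, F z ∈ Set.range ((↑) : ℤ → ℝ) := by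
    rintro z ⟨p, rfl⟩
    refine ⟨p.1 * z₀ + ∑ j, p.2 j * zj j, ?_⟩
    have hre : (vl α p).re = (p.1 : ℝ) + ∑ j, (α j).re * (p.2 j : ℝ) := by
      unfold vl
      rw [Complex.add_re, Complex.re_sum, Complex.intCast_re]
      congr 1
      refine Finset.sum_congr rfl fun j _ => ?_
      rw [Complex.mul_re, Complex.intCast_re, Complex.intCast_im, mul_zero, sub_zero]
    have him : (vl α p).im = ∑ j, (α j).im * (p.2 j : ℝ) := by
      unfold vl
      rw [Complex.add_im, Complex.im_sum, Complex.intCast_im, zero_add]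
      refine Finset.sum_congr rfl fun j _ => ?_
      rw [Complex.mul_im, Complex.intCast_re, Complex.intCast_im, mul_zero, zero_add]
    symm
    show ((D : ℝ) * φ₁) * (vl α p).re + ((D : ℝ) * φ₂) * (vl α p).im
      = ((p.1 * z₀ + ∑ j, p.2 j * zj j : ℤ) : ℝ)
    rw [hre, him]
    have hexp : ((D:ℝ) * φ₁) * ((p.1 : ℝ) + ∑ j, (α j).re * (p.2 j : ℝ))
        + ((D:ℝ) * φ₂) * (∑ j, (α j).im * (p.2 j : ℝ))
        = (p.1 : ℝ) * (φ₁ * (D:ℝ))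
          + ∑ j, (p.2 j : ℝ) * ((φ₁ * (α j).re + φ₂ * (α j).im) * (D:ℝ)) := by
      rw [mul_add, Finset.mul_sum, Finset.mul_sum, add_assoc, ← Finset.sum_add_distrib]
      congr 1
      · ring
      · exact Finset.sum_congr rfl fun j _ => by ring
    rw [hexp]
    have h1 : φ₁ * (D:ℝ) = (z₀ : ℝ) := by rw [hφ₁]; exact hz₀
    have h2 : ∀ j, (φ₁ * (α j).re + φ₂ * (α j).im) * (D:ℝ) = (zj j : ℝ) := by
      intro j
      rw [hkey j]
      exact hzj j
    rw [h1, Finset.sum_congr rfl fun j _ => by rw [h2 j]]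
    push_cast
    ring
  have hclosed : IsClosed (Set.range ((↑) : ℤ → ℝ)) :=
    Int.isClosedEmbedding_coe_real.isClosed_range
  have hsub : closure (SS α) ⊆ F ⁻¹' (Set.range ((↑) : ℤ → ℝ)) :=
    closure_minimal (fun z hz => hFS z hz) (hclosed.preimage hFcont)
  rw [hd.closure_eq] at hsub
  have hφne : ¬(φ₁ = 0 ∧ φ₂ = 0) := by
    rintro ⟨h1, h2⟩
    apply hcon
    have hr1 : r₁ = 0 := by exact_mod_cast hφ₁ ▸ h1
    refine ⟨hr1, ?_⟩
    rw [hφ₂, div_eq_zero_iff] at h2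
    rcases h2 with h2 | h2
    · have : (r₂ : ℝ) = 0 := by
        have : (r₁ : ℝ) = 0 := by exact_mod_cast hr1
        rw [this] at h2
        linarith
      exact_mod_cast this
    · exact absurd h2 hk
  have hDne : (D : ℝ) ≠ 0 := by positivity
  have hzz : ∃ zz : ℂ, F zz = 1/2 := by
    by_cases h1 : φ₁ = 0
    · have h2 : φ₂ ≠ 0 := fun h => hφne ⟨h1, h⟩
      refine ⟨⟨0, 1/(2*((D:ℝ)*φ₂))⟩, ?_⟩
      show ((D : ℝ) * φ₁) * (0:ℝ) + ((D : ℝ) * φ₂) * (1/(2*((D:ℝ)*φ₂))) = 1/2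
      rw [h1]
      field_simp
      ring
    · refine ⟨⟨1/(2*((D:ℝ)*φ₁)), 0⟩, ?_⟩
      show ((D : ℝ) * φ₁) * (1/(2*((D:ℝ)*φ₁))) + ((D : ℝ) * φ₂) * (0:ℝ) = 1/2
      field_simp
      ring
  obtain ⟨zz, hzzF⟩ := hzz
  obtain ⟨w, hw⟩ := hsub (Set.mem_univ zz)
  rw [hzzF] at hw
  have : (2 * w : ℤ) = (1 : ℤ) := by
    have h2w : (2:ℝ) * (w:ℝ) = 1 := by linarith
    exact_mod_cast h2w
  omega

lemma backward_dir {k : Fin N} (hk : (α k).im ≠ 0)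
    (hRHS : ∀ r₁ r₂ : ℚ,
      (∀ j, j ≠ k → ∃ s : ℚ,
        ((r₁ : ℝ) * ((α j).re * (α k).im - (α k).re * (α j).im)
          + (r₂ : ℝ) * (α j).im) / (α k).im = (s : ℝ)) →
      r₁ = 0 ∧ r₂ = 0) :
    Dense (SS α) := by
  rcases AddSubgroup.dense_or_cyclic (BB α) with hBd | ⟨d, hdd⟩
  · by_contra hnd
    obtain ⟨r₁, r₂, hne, hprop⟩ := rat_witness_of_ann α hk (exists_int_ann α hBd hnd)
    exact hne (hRHS r₁ r₂ hprop)
  · exfalso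
    have hmemB : ∀ j, ∃ m : ℤ, m • d = (α j).im := by
      intro j
      have hmem : (α j).im ∈ BB α := AddSubgroup.subset_closure ⟨j, rfl⟩
      rw [hdd] at hmem
      exact AddSubgroup.mem_closure_singleton.1 hmem
    choose mj hmj using hmemB
    have hdne : d ≠ 0 := by
      intro h
      apply hk
      rw [← hmj k, h]
      simp
    have hmkne : mj k ≠ 0 := by
      intro h
      apply hk
      rw [← hmj k, h]
      simp
    have hres := hRHS 0 ((mj k : ℤ) : ℚ) ?_
    · exact hmkne (by exact_mod_cast hres.2)
    · intro j hj
      refine ⟨(mj j : ℚ), ?_⟩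
      push_cast
      rw [← hmj j, ← hmj k, zsmul_eq_mul, zsmul_eq_mul]
      have hmkR : ((mj k : ℤ) : ℝ) ≠ 0 := Int.cast_ne_zero.2 hmkne
      field_simp
      ring

end St11

/-- Main theorem: if `Im α_k ≠ 0` for some `k`, then `𝓜_N(α)` is a dense `G_δ` subset of
`ℂ` iff the only `(r₁, r₂) ∈ ℚ²` with
`(r₁ (Re α_j Im α_k − Re α_k Im α_j) + r₂ Im α_j) / Im α_k ∈ ℚ` for every `j ≠ k`
is `(0, 0)`. -/
theorem stmt11 (N : ℕ) (hN : 2 ≤ N) (α : Fin N → ℂ) (k : Fin N) (hk : (α k).im ≠ 0) :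
    (Dense {lam : ℂ | ¬ dioph α lam} ∧ IsGδ {lam : ℂ | ¬ dioph α lam}) ↔
      (∀ r₁ r₂ : ℚ,
        (∀ j, j ≠ k → ∃ s : ℚ,
          ((r₁ : ℝ) * ((α j).re * (α k).im - (α k).re * (α j).im)
            + (r₂ : ℝ) * (α j).im) / (α k).im = (s : ℝ)) →
        r₁ = 0 ∧ r₂ = 0) := by
  constructor
  · rintro ⟨hd, -⟩
    exact St11.forward_dir α hk ((St11.dense_not_dioph_iff α).1 hd)
  · intro hRHS
    exact ⟨(St11.dense_not_dioph_iff α).2 (St11.backward_dir α hk hRHS),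
      St11.isGδ_not_dioph α⟩
end

section
/- Let N ≥ 2, α = (α₁,…,α_N) ∈ ℂ^N, and k ∈ {1,…,N} with Im α_k ≠ 0. The additive subgroup ℤ + α₁ℤ + ⋯ + α_Nℤ is dense in ℂ if and only if the only pair (r₁,r₂) ∈ ℚ² such that (r₁·(Re α_j · Im α_k − Re α_k · Im α_j) + r₂·Im α_j)/Im α_k ∈ ℚ for every j ∈ {1,…,N}\{k} is (r₁,r₂) = (0,0). -/
open Finset

namespace Stmt12
open Filter
variable {N : ℕ} (α : Fin N → ℂ)

def piF (A B : ℝ) : ℂ →+ ℝ where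
  toFun z := A * z.re + B * z.im
  map_zero' := by simp
  map_add' x y := by simp [Complex.add_re, Complex.add_im]; ring

lemma piF_apply (A B : ℝ) (z : ℂ) : piF A B z = A * z.re + B * z.im := rfl

lemma piF_real_mul (A B t : ℝ) (z : ℂ) : piF A B ((t : ℂ) * z) = t * piF A B z := by
  simp [piF_apply, Complex.mul_re, Complex.mul_im]; ring

lemma piF_int_mul (A B : ℝ) (n : ℤ) (z : ℂ) :
    piF A B (z * ((n : ℤ) : ℂ)) = (n : ℝ) * piF A B z := by
  simp [piF_apply, Complex.mul_re, Complex.mul_im]; ring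

lemma piF_intCast (A B : ℝ) (n : ℤ) : piF A B ((n : ℤ) : ℂ) = A * n := by
  simp [piF_apply]

lemma piF_one (A B : ℝ) : piF A B 1 = A := by simp [piF_apply]

lemma continuous_piF (A B : ℝ) : Continuous (piF A B) := by
  simp only [piF]
  exact ((continuous_const.mul Complex.continuous_re).add
    (continuous_const.mul Complex.continuous_im))

lemma ratint (q : ℚ) (D : ℕ) (h : q.den ∣ D) : ∃ m : ℤ, q * D = (m : ℚ) := by
  obtain ⟨e, he⟩ := h
  refine ⟨q.num * e, ?_⟩
  have : q * q.den = q.num := Rat.mul_den_eq_num q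
  rw [he]
  push_cast
  rw [← mul_assoc, this]

noncomputable def lattA : AddSubgroup ℂ where
  carrier := latt α
  zero_mem' := ⟨0, 0, by simp⟩
  add_mem' := by
    rintro x y ⟨a₀, a, rfl⟩ ⟨b₀, b, rfl⟩
    refine ⟨a₀ + b₀, a + b, ?_⟩
    push_cast [Pi.add_apply]
    simp only [mul_add, Finset.sum_add_distrib]
    ring
  neg_mem' := by
    rintro x ⟨a₀, a, rfl⟩
    refine ⟨-a₀, -a, ?_⟩
    push_cast [Pi.neg_apply]
    simp only [mul_neg, Finset.sum_neg_distrib]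
    ring

lemma lattA_coe : (lattA α : Set ℂ) = latt α := rfl

lemma latt_sub : ∀ x ∈ latt α, ∀ y ∈ latt α, x - y ∈ latt α := by
  intro x hx y hy
  have : x - y ∈ lattA α := (lattA α).sub_mem hx hy
  exact this

lemma one_mem_latt : (1 : ℂ) ∈ latt α := ⟨1, 0, by simp⟩

lemma alpha_mem_latt (j : Fin N) : α j ∈ latt α := by
  refine ⟨0, fun j' => if j' = j then 1 else 0, ?_⟩
  simp [apply_ite, Finset.sum_ite_eq', mul_ite]

lemma basis_decomp (k : Fin N) (hk : (α k).im ≠ 0) (z : ℂ) :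
    z = (((z.re * (α k).im - (α k).re * z.im) / (α k).im : ℝ) : ℂ)
      + (((z.im / (α k).im : ℝ)) : ℂ) * α k := by
  apply Complex.ext
  · simp only [Complex.add_re, Complex.ofReal_re, Complex.mul_re, Complex.ofReal_im]
    field_simp
    ring
  · simp only [Complex.add_im, Complex.ofReal_im, Complex.mul_im, Complex.ofReal_re]
    field_simp
    ring

theorem forward (k : Fin N) (hk : (α k).im ≠ 0) (hd : Dense (latt α))
    (r₁ r₂ : ℚ)
    (hcond : ∀ j, j ≠ k → ∃ s : ℚ,
      ((r₁ : ℝ) * ((α j).re * (α k).im - (α k).re * (α j).im)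
        + (r₂ : ℝ) * (α j).im) / (α k).im = (s : ℝ)) :
    r₁ = 0 ∧ r₂ = 0 := by
  by_contra hne
  -- choose the rationals s j
  have hs' : ∀ j : Fin N, ∃ s : ℚ, j ≠ k →
      ((r₁ : ℝ) * ((α j).re * (α k).im - (α k).re * (α j).im)
        + (r₂ : ℝ) * (α j).im) / (α k).im = (s : ℝ) := by
    intro j
    by_cases h : j = k
    · exact ⟨0, fun h' => absurd h h'⟩
    · obtain ⟨s, hs⟩ := hcond j h
      exact ⟨s, fun _ => hs⟩
  choose s hs using hs'
  set b : ℝ := (α k).im with hb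
  set A : ℝ := (r₁ : ℝ) with hA
  set B : ℝ := ((r₂ : ℝ) - (r₁ : ℝ) * (α k).re) / b with hB
  -- values on generators
  have hgen : ∀ j : Fin N, j ≠ k → piF A B (α j) = (s j : ℝ) := by
    intro j hj
    rw [← hs j hj, piF_apply, hA, hB]
    field_simp
    ring
  have hαk : piF A B (α k) = (r₂ : ℝ) := by
    rw [piF_apply, hA, hB]
    field_simp
    rw [hb]; ring
  set c : Fin N → ℚ := fun j => if j = k then r₂ else s j with hcdef
  have hc : ∀ j, piF A B (α j) = (c j : ℝ) := by
    intro j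
    by_cases h : j = k
    · subst h; simp [hcdef, hαk]
    · simp [hcdef, h, hgen j h]
  set D : ℕ := r₁.den * ∏ j, (c j).den with hD
  have hDpos : 0 < D := by
    apply Nat.mul_pos r₁.den_pos
    exact Finset.prod_pos fun j _ => (c j).den_pos
  -- the functional maps latt into (1/D)ℤ
  have key : ∀ g ∈ latt α, ∃ m : ℤ, (D : ℝ) * piF A B g = (m : ℝ) := by
    rintro g ⟨n₀, n, rfl⟩
    obtain ⟨m₀, hm₀⟩ := ratint r₁ D ⟨∏ j, (c j).den, rfl⟩
    have hdvd : ∀ j : Fin N, (c j).den ∣ D := by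
      intro j
      exact Dvd.dvd.mul_left (Finset.dvd_prod_of_mem _ (Finset.mem_univ j)) _
    choose m hm using fun j => ratint (c j) D (hdvd j)
    refine ⟨n₀ * m₀ + ∑ j, n j * m j, ?_⟩
    rw [map_add, map_sum]
    have e1 : piF A B ((n₀ : ℤ) : ℂ) = (r₁ : ℝ) * n₀ := by
      rw [piF_intCast, hA]
    have e2 : ∀ j : Fin N, piF A B (α j * ((n j : ℤ) : ℂ)) = ((n j : ℝ)) * (c j : ℝ) := by
      intro j; rw [piF_int_mul, hc]
    rw [e1, Finset.sum_congr rfl fun j _ => e2 j]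
    have hm₀R : (r₁ : ℝ) * D = (m₀ : ℝ) := by exact_mod_cast congrArg (Rat.cast (K := ℝ)) hm₀
    have hmR : ∀ j, (c j : ℝ) * D = (m j : ℝ) := fun j => by
      exact_mod_cast congrArg (Rat.cast (K := ℝ)) (hm j)
    push_cast
    rw [mul_add, Finset.mul_sum]
    rw [show (D : ℝ) * ((r₁ : ℝ) * n₀) = (n₀ : ℝ) * ((r₁ : ℝ) * D) by ring, hm₀R]
    congr 1
    refine Finset.sum_congr rfl fun j _ => ?_
    rw [show (D : ℝ) * ((n j : ℝ) * (c j : ℝ)) = (n j : ℝ) * ((c j : ℝ) * D) by ring, hmR j]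
  -- pick a point where the functional is nonzero
  have hnz : ∃ z₀ : ℂ, piF A B z₀ ≠ 0 := by
    rcases not_and_or.mp hne with h | h
    · exact ⟨1, by rw [piF_one, hA]; exact_mod_cast h⟩
    · exact ⟨α k, by rw [hαk]; exact_mod_cast h⟩
  obtain ⟨z₀, hz₀⟩ := hnz
  set V : ℝ := piF A B z₀ with hV
  have hDV : (D : ℝ) * V ≠ 0 := by
    apply mul_ne_zero _ hz₀
    exact_mod_cast hDpos.ne'
  -- the point mapping to 1/2
  set zb : ℂ := (((1 / 2) / ((D : ℝ) * V) : ℝ) : ℂ) * z₀ with hzb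
  have hψzb : (D : ℝ) * piF A B zb = 1 / 2 := by
    rw [hzb, piF_real_mul]
    rw [← hV]
    field_simp
  -- density gives 1/2 in the closure of the image
  have hmem : (1 / 2 : ℝ) ∈ closure ((fun z => (D : ℝ) * piF A B z) '' latt α) := by
    rw [← hψzb]
    apply image_closure_subset_closure_image
      (by exact continuous_const.mul (continuous_piF A B))
    exact ⟨zb, hd zb, rfl⟩
  have himage : ((fun z => (D : ℝ) * piF A B z) '' latt α) ⊆ Set.range ((↑) : ℤ → ℝ) := by
    rintro x ⟨g, hg, rfl⟩
    obtain ⟨m, hm⟩ := key g hg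
    exact ⟨m, hm.symm⟩
  have : (1 / 2 : ℝ) ∈ Set.range ((↑) : ℤ → ℝ) := by
    have hcl : closure ((fun z => (D : ℝ) * piF A B z) '' latt α)
        ⊆ closure (Set.range ((↑) : ℤ → ℝ)) := closure_mono himage
    rw [Int.isClosedEmbedding_coe_real.isClosed_range.closure_eq] at hcl
    exact hcl hmem
  obtain ⟨m, hm⟩ := this
  have h2 : ((2 * m : ℤ) : ℝ) = ((1 : ℤ) : ℝ) := by push_cast; linarith
  have := Int.cast_injective h2
  omega


lemma discrete_case (k : Fin N) (hk : (α k).im ≠ 0) (ε : ℝ) (hε : 0 < ε)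
    (hdisc : ∀ g ∈ latt α, ‖g‖ < ε → g = 0) (j : Fin N) (hj : j ≠ k) :
    (∃ q : ℚ, ((α j).re * (α k).im - (α k).re * (α j).im) / (α k).im = (q : ℝ)) ∧
    (∃ q : ℚ, (α j).im / (α k).im = (q : ℝ)) := by
  by_contra hne
  set X : ℝ := ((α j).re * (α k).im - (α k).re * (α j).im) / (α k).im with hX
  set Y : ℝ := (α j).im / (α k).im with hY
  have hαj : α j = ((X : ℝ) : ℂ) + ((Y : ℝ) : ℂ) * α k := basis_decomp α k hk (α j)
  -- the sequence of fractional-part points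
  set g : ℕ → ℂ := fun n =>
    ((Int.fract (n * X) : ℝ) : ℂ) + ((Int.fract (n * Y) : ℝ) : ℂ) * α k with hg
  have hgmem : ∀ n : ℕ, g n ∈ latt α := by
    intro n
    refine ⟨-⌊(n : ℝ) * X⌋, fun j' => (if j' = j then (n : ℤ) else 0)
      + (if j' = k then -⌊(n : ℝ) * Y⌋ else 0), ?_⟩
    push_cast
    simp only [mul_add, Finset.sum_add_distrib, mul_ite, mul_zero, Finset.sum_ite_eq',
      Finset.mem_univ, if_true]
    rw [hg]
    simp only []
    rw [hαj]
    push_cast [Int.fract]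
    ring
  -- boundedness
  have hgbd : ∀ n : ℕ, g n ∈ Metric.closedBall (0 : ℂ) (1 + ‖α k‖) := by
    intro n
    rw [Metric.mem_closedBall, dist_zero_right]
    refine le_trans (norm_add_le _ _) ?_
    have h1 : ‖((Int.fract ((n : ℝ) * X) : ℝ) : ℂ)‖ ≤ 1 := by
      rw [Complex.norm_real]
      rw [Real.norm_eq_abs, abs_of_nonneg (Int.fract_nonneg _)]
      exact (Int.fract_lt_one _).le
    have h2 : ‖((Int.fract ((n : ℝ) * Y) : ℝ) : ℂ) * α k‖ ≤ ‖α k‖ := by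
      rw [norm_mul, Complex.norm_real]
      rw [Real.norm_eq_abs, abs_of_nonneg (Int.fract_nonneg _)]
      calc Int.fract ((n : ℝ) * Y) * ‖α k‖ ≤ 1 * ‖α k‖ := by
            apply mul_le_mul_of_nonneg_right (Int.fract_lt_one _).le (norm_nonneg _)
        _ = ‖α k‖ := one_mul _
    linarith
  -- injectivity
  have hginj : Function.Injective g := by
    intro n m hnm
    by_contra hne'
    -- equate imaginary and real parts
    have him : Int.fract ((n : ℝ) * Y) = Int.fract ((m : ℝ) * Y) := by
      have := congrArg Complex.im hnm
      simp only [hg, Complex.add_im, Complex.ofReal_im, Complex.mul_im,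
        Complex.ofReal_re, zero_mul, zero_add, add_zero] at this
      exact mul_right_cancel₀ hk (by linear_combination this)
    have hre : Int.fract ((n : ℝ) * X) = Int.fract ((m : ℝ) * X) := by
      have := congrArg Complex.re hnm
      simp only [hg, Complex.add_re, Complex.ofReal_re, Complex.mul_re,
        Complex.ofReal_im, zero_mul, sub_zero] at this
      rw [him] at this
      linarith
    obtain ⟨zx, hzx⟩ := Int.fract_eq_fract.mp hre
    obtain ⟨zy, hzy⟩ := Int.fract_eq_fract.mp him
    have hnm' : (n : ℝ) - m ≠ 0 := by
      have : (n : ℝ) ≠ m := by exact_mod_cast hne'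
      exact sub_ne_zero_of_ne this
    apply hne
    constructor
    · refine ⟨(zx : ℚ) / ((n : ℚ) - m), ?_⟩
      push_cast
      rw [eq_div_iff hnm']
      linear_combination hzx
    · refine ⟨(zy : ℚ) / ((n : ℚ) - m), ?_⟩
      push_cast
      rw [eq_div_iff hnm']
      linear_combination hzy
  -- Bolzano–Weierstrass: extract a convergent subsequence, contradict discreteness
  obtain ⟨L, -, φ, hφ, hconv⟩ :=
    tendsto_subseq_of_bounded Metric.isBounded_closedBall hgbd
  have hcauchy := hconv.cauchySeq
  rw [Metric.cauchySeq_iff'] at hcauchy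
  obtain ⟨M, hM⟩ := hcauchy ε hε
  have hlt := hM (M + 1) (by omega)
  set d : ℂ := g (φ (M + 1)) - g (φ M) with hd
  have hdmem : d ∈ latt α := latt_sub α _ (hgmem _) _ (hgmem _)
  have hdnorm : ‖d‖ < ε := by
    rw [hd, ← dist_eq_norm]
    exact hlt
  have hd0 : d = 0 := hdisc d hdmem hdnorm
  have : g (φ (M + 1)) = g (φ M) := by
    rw [hd] at hd0
    linear_combination hd0
  have := hginj this
  have := hφ.injective this
  omega


set_option maxHeartbeats 1000000 in
lemma line_case (k : Fin N) (hk : (α k).im ≠ 0) (hnd : ¬ Dense (latt α))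
    (hnondisc : ∀ ε : ℝ, 0 < ε → ∃ g ∈ latt α, ‖g‖ < ε ∧ g ≠ 0) :
    ∃ p q : ℤ, ¬(p = 0 ∧ q = 0) ∧ ∀ j, j ≠ k → ∃ m : ℤ,
      (p : ℝ) * (((α j).re * (α k).im - (α k).re * (α j).im) / (α k).im)
        + (q : ℝ) * ((α j).im / (α k).im) = (m : ℝ) := by
  -- a sequence of small nonzero lattice elements
  have hseq : ∀ n : ℕ, ∃ g, g ∈ latt α ∧ ‖g‖ < 1 / (n + 1) ∧ g ≠ 0 := by
    intro n
    obtain ⟨g, hg, h1, h2⟩ := hnondisc (1 / (n + 1)) (by positivity)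
    exact ⟨g, hg, h1, h2⟩
  choose sf hsfmem hsflt hsfne using hseq
  set c : ℕ → ℝ := fun n => ‖sf n‖ with hcdef
  have hcpos : ∀ n, 0 < c n := fun n => norm_pos_iff.mpr (hsfne n)
  set u : ℕ → ℂ := fun n => (c n)⁻¹ • sf n with hudef
  have hunorm : ∀ n, u n ∈ Metric.closedBall (0 : ℂ) 1 := by
    intro n
    rw [Metric.mem_closedBall, dist_zero_right, hudef]
    simp only [norm_smul, norm_inv, Real.norm_eq_abs, abs_of_pos (hcpos n)]
    rw [inv_mul_cancel₀ (hcpos n).ne']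
  obtain ⟨w, -, φ, hφ, hconv⟩ :=
    tendsto_subseq_of_bounded Metric.isBounded_closedBall hunorm
  have hw1 : ‖w‖ = 1 := by
    have h1 : Tendsto (fun n => ‖u (φ n)‖) atTop (nhds ‖w‖) := hconv.norm
    have h2 : ∀ n, ‖u (φ n)‖ = 1 := by
      intro n
      have := hunorm (φ n)
      rw [Metric.mem_closedBall, dist_zero_right] at this
      have : ‖u (φ n)‖ = ‖c (φ n)‖⁻¹ * ‖sf (φ n)‖ := by
        rw [hudef]; simp [norm_smul]
      rw [this, Real.norm_eq_abs, abs_of_pos (hcpos _), inv_mul_cancel₀ (hcpos _).ne']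
    rw [funext h2] at h1
    exact (tendsto_const_nhds_iff.mp h1).symm
  have hw0 : w ≠ 0 := by
    intro h; rw [h, norm_zero] at hw1; exact one_ne_zero hw1.symm
  -- every real multiple of w is in the closure
  have hline : ∀ t : ℝ, t • w ∈ closure (latt α) := by
    intro t
    have hczero : Tendsto (fun n => c (φ n)) atTop (nhds 0) := by
      apply squeeze_zero (fun n => (hcpos _).le) (fun n => ?_)
        tendsto_one_div_add_atTop_nhds_zero_nat
      calc c (φ n) ≤ 1 / (φ n + 1) := (hsflt (φ n)).le
        _ ≤ 1 / (n + 1) := by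
            apply one_div_le_one_div_of_le (by positivity)
            have h5 : n ≤ φ n := hφ.le_apply
            have h5' : (n : ℝ) ≤ φ n := by exact_mod_cast h5
            linarith
    set a : ℕ → ℝ := fun n => (⌊t / c (φ n)⌋ : ℝ) * c (φ n) with hadef
    have ha : Tendsto a atTop (nhds t) := by
      have hdist : ∀ n, ‖a n - t‖ ≤ c (φ n) := by
        intro n
        rw [Real.norm_eq_abs, hadef]
        have h1 : (⌊t / c (φ n)⌋ : ℝ) ≤ t / c (φ n) := Int.floor_le _
        have h2 : t / c (φ n) - 1 < ⌊t / c (φ n)⌋ := Int.sub_one_lt_floor _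
        have h3 : (0 : ℝ) < c (φ n) := hcpos _
        rw [abs_le]
        constructor
        · have := mul_lt_mul_of_pos_right h2 h3
          rw [sub_mul, div_mul_cancel₀ _ h3.ne', one_mul] at this
          linarith
        · have := mul_le_mul_of_nonneg_right h1 h3.le
          rw [div_mul_cancel₀ _ h3.ne'] at this
          linarith
      have := squeeze_zero_norm hdist hczero
      have h4 : Tendsto (fun n => (a n - t) + t) atTop (nhds (0 + t)) :=
        this.add_const t
      simpa using h4
    have hv : Tendsto (fun n => a n • u (φ n)) atTop (nhds (t • w)) := ha.smul hconv
    apply mem_closure_of_tendsto hv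
    apply Filter.Eventually.of_forall
    intro n
    have heq : a n • u (φ n) = (⌊t / c (φ n)⌋ : ℤ) • sf (φ n) := by
      rw [hadef, hudef]
      simp only [smul_smul]
      rw [mul_assoc, mul_inv_cancel₀ (hcpos _).ne', mul_one]
      rw [← Int.cast_smul_eq_zsmul ℝ]
    rw [heq]
    have : (⌊t / c (φ n)⌋ : ℤ) • sf (φ n) ∈ lattA α := by
      apply AddSubgroup.zsmul_mem
      rw [← SetLike.mem_coe, lattA_coe α]
      exact hsfmem (φ n)
    rw [← SetLike.mem_coe, lattA_coe α] at this
    exact this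
  -- the functional with kernel ℝw
  set π : ℂ →+ ℝ := piF w.im (-w.re) with hπ
  have hker : ∀ z : ℂ, π z = 0 → z ∈ closure (latt α) := by
    intro z hz
    rw [hπ, piF_apply] at hz
    by_cases hwi : w.im = 0
    · have hwr : w.re ≠ 0 := by
        intro h
        exact hw0 (Complex.ext h hwi)
      have hzim : z.im = 0 := by
        rw [hwi] at hz
        have : w.re * z.im = 0 := by linarith
        exact (mul_eq_zero.mp this).resolve_left hwr
      have : z = (z.re / w.re) • w := by
        apply Complex.ext
        · rw [Complex.real_smul, Complex.mul_re]
          simp [hwi]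
          field_simp
        · rw [Complex.real_smul, Complex.mul_im]
          simp [hwi, hzim]
      rw [this]
      exact hline _
    · have : z = (z.im / w.im) • w := by
        apply Complex.ext
        · rw [Complex.real_smul, Complex.mul_re]
          simp only [Complex.ofReal_re, Complex.ofReal_im, zero_mul, sub_zero]
          field_simp
          linarith
        · rw [Complex.real_smul, Complex.mul_im]
          simp only [Complex.ofReal_re, Complex.ofReal_im, zero_mul, add_zero]
          field_simp
      rw [this]
      exact hline _
  -- the image subgroup in ℝ
  set S : AddSubgroup ℂ := (lattA α).topologicalClosure with hS
  have hScoe : (S : Set ℂ) = closure (latt α) := by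
    rw [hS]
    have : ((lattA α).topologicalClosure : Set ℂ) = closure (lattA α : Set ℂ) := rfl
    rw [this, lattA_coe α]
  set T : AddSubgroup ℝ := AddSubgroup.map π S with hT
  rcases T.dense_or_cyclic with hdense | ⟨a, hTa⟩
  · -- dense image: then the lattice itself is dense, contradiction
    exfalso
    apply hnd
    -- a point with π z₀ = 1
    obtain ⟨z', hz'⟩ : ∃ z', π z' ≠ 0 := by
      by_cases hwi : w.im = 0
      · refine ⟨Complex.I, ?_⟩
        rw [hπ, piF_apply]
        simp only [Complex.I_re, Complex.I_im, mul_zero, mul_one, zero_add]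
        intro h
        apply hw0
        apply Complex.ext _ hwi
        simp only [Complex.zero_re]
        linarith
      · exact ⟨1, by rw [hπ, piF_apply]; simpa using hwi⟩
    set z₀ : ℂ := (((π z')⁻¹ : ℝ) : ℂ) * z' with hz₀def
    have hz₀ : π z₀ = 1 := by
      rw [hz₀def, hπ, piF_real_mul, ← hπ, inv_mul_cancel₀ hz']
    rw [dense_iff_closure_eq]
    apply Set.eq_univ_of_forall
    intro z
    have hz : z ∈ closure (closure (latt α)) := by
      rw [Metric.mem_closure_iff]
      intro ε hε
      set δ : ℝ := ε / (2 * (‖z₀‖ + 1)) with hδdef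
      have hδpos : 0 < δ := by positivity
      obtain ⟨x, hxT, hxd⟩ := Metric.mem_closure_iff.mp (hdense (π z)) δ hδpos
      obtain ⟨s, hsS, hsx⟩ := hxT
      set kp : ℂ := (z - s) - ((π (z - s) : ℝ) : ℂ) * z₀ with hkp
      have hkp0 : π kp = 0 := by
        rw [hkp, map_sub, hπ, piF_real_mul, ← hπ, hz₀]
        ring
      have hkpS : kp ∈ S := by
        rw [← SetLike.mem_coe, hScoe]
        exact hker kp hkp0
      set y : ℂ := s + kp with hy
      have hyS : y ∈ S := S.add_mem hsS hkpS
      refine ⟨y, ?_, ?_⟩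
      · rw [← hScoe]; exact hyS
      · have hzy : z - y = ((π (z - s) : ℝ) : ℂ) * z₀ := by
          rw [hy, hkp]; ring
        rw [dist_eq_norm, hzy, norm_mul, Complex.norm_real]
        have h6 : π (z - s) = π z - x := by rw [map_sub, hsx]
        have h7 : ‖π (z - s)‖ < δ := by
          rw [h6, Real.norm_eq_abs, ← Real.dist_eq]
          exact hxd
        calc ‖π (z - s)‖ * ‖z₀‖ ≤ ‖π (z - s)‖ * (‖z₀‖ + 1) := by
              apply mul_le_mul_of_nonneg_left (by linarith) (norm_nonneg _)
          _ < δ * (‖z₀‖ + 1) := by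
              apply mul_lt_mul_of_pos_right h7 (by positivity)
          _ = ε / 2 := by
              rw [hδdef]
              have hz₀1 : (0 : ℝ) < ‖z₀‖ + 1 := by positivity
              field_simp
          _ < ε := by linarith
    rwa [closure_closure] at hz
  · -- cyclic image: extract the integer relation
    have memT : ∀ x ∈ latt α, ∃ m : ℤ, m • a = π x := by
      intro x hx
      have hxS : x ∈ S := by
        rw [← SetLike.mem_coe, hScoe]
        exact subset_closure hx
      have : π x ∈ T := ⟨x, hxS, rfl⟩
      rw [hTa] at this
      exact AddSubgroup.mem_closure_singleton.mp this
    obtain ⟨p, hp⟩ := memT 1 (one_mem_latt α)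
    obtain ⟨q, hq⟩ := memT (α k) (alpha_mem_latt α k)
    have hπ1 : π 1 = w.im := by rw [hπ, piF_apply]; simp
    have hπk : π (α k) = w.im * (α k).re - w.re * (α k).im := by
      rw [hπ, piF_apply]; ring
    have ha : a ≠ 0 := by
      intro h
      rw [h, smul_zero] at hp hq
      apply hw0
      have h1 : w.im = 0 := by rw [← hπ1, ← hp]
      have h2 : w.re * (α k).im = 0 := by
        have := hq.symm
        rw [hπk, h1] at this
        linarith
      exact Complex.ext ((mul_eq_zero.mp h2).resolve_right hk) h1
    have hpq : ¬(p = 0 ∧ q = 0) := by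
      rintro ⟨hp0, hq0⟩
      rw [hp0, zero_zsmul] at hp
      rw [hq0, zero_zsmul] at hq
      apply hw0
      have h1 : w.im = 0 := by rw [← hπ1, ← hp]
      have h2 : w.re * (α k).im = 0 := by
        have := hq.symm
        rw [hπk, h1] at this
        linarith
      exact Complex.ext ((mul_eq_zero.mp h2).resolve_right hk) h1
    refine ⟨p, q, hpq, fun j hj => ?_⟩
    obtain ⟨m, hm⟩ := memT (α j) (alpha_mem_latt α j)
    refine ⟨m, ?_⟩
    set X : ℝ := ((α j).re * (α k).im - (α k).re * (α j).im) / (α k).im with hXdef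
    set Y : ℝ := (α j).im / (α k).im with hYdef
    have hdecomp : α j = ((X : ℝ) : ℂ) + ((Y : ℝ) : ℂ) * α k := basis_decomp α k hk (α j)
    have hπαj : π (α j) = X * π 1 + Y * π (α k) := by
      conv_lhs => rw [hdecomp]
      rw [map_add, hπ, piF_real_mul, show ((X : ℝ) : ℂ) = ((X : ℝ) : ℂ) * 1 by ring,
        piF_real_mul]
    have hfinal : (m : ℝ) * a = ((p : ℝ) * X + (q : ℝ) * Y) * a := by
      have h1 : (m : ℝ) * a = π (α j) := by rw [← hm, zsmul_eq_mul]
      have h2 : (p : ℝ) * a = π 1 := by rw [← hp, zsmul_eq_mul]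
      have h3 : (q : ℝ) * a = π (α k) := by rw [← hq, zsmul_eq_mul]
      rw [h1, hπαj, ← h2, ← h3]
      ring
    have := mul_right_cancel₀ ha hfinal
    rw [this]


end Stmt12

/-- Kronecker-approximation step: if `Im α_k ≠ 0`, the subgroup
`ℤ + α₁ℤ + ⋯ + α_Nℤ` is dense in `ℂ` iff the only `(r₁, r₂) ∈ ℚ²` with
`(r₁ (Re α_j Im α_k − Re α_k Im α_j) + r₂ Im α_j) / Im α_k ∈ ℚ` for every `j ≠ k`
is `(0, 0)`. -/
theorem stmt12 (N : ℕ) (hN : 2 ≤ N) (α : Fin N → ℂ) (k : Fin N) (hk : (α k).im ≠ 0) :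
    Dense (latt α) ↔
      (∀ r₁ r₂ : ℚ,
        (∀ j, j ≠ k → ∃ s : ℚ,
          ((r₁ : ℝ) * ((α j).re * (α k).im - (α k).re * (α j).im)
            + (r₂ : ℝ) * (α j).im) / (α k).im = (s : ℝ)) →
        r₁ = 0 ∧ r₂ = 0) := by
  constructor
  · intro hd r₁ r₂ hcond
    exact Stmt12.forward α k hk hd r₁ r₂ hcond
  · intro hcond
    by_contra hnd
    by_cases hdisc : ∃ ε : ℝ, 0 < ε ∧ ∀ g ∈ latt α, ‖g‖ < ε → g = 0
    · obtain ⟨ε, hε, hdd⟩ := hdisc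
      have h := hcond 1 0 ?_
      · exact one_ne_zero h.1
      · intro j hj
        obtain ⟨⟨qx, hqx⟩, -⟩ := Stmt12.discrete_case α k hk ε hε hdd j hj
        refine ⟨qx, ?_⟩
        rw [← hqx]
        push_cast
        ring
    · push_neg at hdisc
      have hnondisc : ∀ ε : ℝ, 0 < ε → ∃ g ∈ latt α, ‖g‖ < ε ∧ g ≠ 0 := by
        intro ε hε
        obtain ⟨g, hg, h1, h2⟩ := hdisc ε hε
        exact ⟨g, hg, h1, h2⟩
      obtain ⟨p, q, hpq, hrel⟩ := Stmt12.line_case α k hk hnd hnondisc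
      have hcnd : ∀ j, j ≠ k → ∃ s : ℚ,
          (((p : ℚ) : ℝ) * ((α j).re * (α k).im - (α k).re * (α j).im)
            + ((q : ℚ) : ℝ) * (α j).im) / (α k).im = (s : ℝ) := by
        intro j hj
        obtain ⟨m, hm⟩ := hrel j hj
        refine ⟨(m : ℚ), ?_⟩
        push_cast
        rw [← hm]
        field_simp
      have h := hcond (p : ℚ) (q : ℚ) hcnd
      apply hpq
      constructor
      · exact_mod_cast h.1
      · exact_mod_cast h.2
end
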